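/- arXiv:0809.4142 — 5 statements merged into one kernel-verified Lean document; each statement's English description precedes it below -/
import Mathlib

section
/- Let A ∈ SL(2,ℤ) with A ≠ I and A ≠ −I. Then the set of points v ∈ ℚ ∪ {∞} such that A·v = v or A·v is Farey-adjacent to v is contained in the union of at most two A-equivalence classes (i.e. at most two orbits of the cyclic group generated by A). -/
open OnePoint Matrix

/-- `SL(2,ℤ)`. -/
abbrev SL2Z := Matrix.SpecialLinearGroup (Fin 2) ℤ

/-- The Möbius action of `SL(2,ℤ)` on the rational projective line `ℚ ∪ {∞}`:
the matrix `[[a,b],[c,d]]` sends `x` to `(ax+b)/(cx+d)` (and `∞ = 1/0`). -/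
def mob (A : SL2Z) : OnePoint ℚ → OnePoint ℚ
  | OnePoint.infty =>
      if (A.1 1 0 : ℚ) = 0 then OnePoint.infty
      else OnePoint.some ((A.1 0 0 : ℚ) / (A.1 1 0 : ℚ))
  | OnePoint.some x =>
      if (A.1 1 0 : ℚ) * x + (A.1 1 1 : ℚ) = 0 then OnePoint.infty
      else OnePoint.some (((A.1 0 0 : ℚ) * x + (A.1 0 1 : ℚ)) /
        ((A.1 1 0 : ℚ) * x + (A.1 1 1 : ℚ)))

/-- Farey adjacency on `ℚ ∪ {∞}`: the reduced fractions `p/q` and `r/s`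
are adjacent iff `|ps - qr| = 1`, where `∞ = 1/0`.  (Rationals in Lean are
stored in lowest terms with positive denominator.) -/
def fareyAdj : OnePoint ℚ → OnePoint ℚ → Prop
  | OnePoint.infty, OnePoint.infty => False
  | OnePoint.infty, OnePoint.some x => x.den = 1
  | OnePoint.some x, OnePoint.infty => x.den = 1
  | OnePoint.some x, OnePoint.some y => |x.num * (y.den : ℤ) - (x.den : ℤ) * y.num| = 1

/-! ### Auxiliary development -/

/-- The point of the rational projective line determined by a pair of integers. -/
def pt (p q : ℤ) : OnePoint ℚ := if q = 0 then OnePoint.infty else OnePoint.some ((p : ℚ)/(q : ℚ))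

/-- The quadratic form `det(v, Av)` attached to `A`. -/
def Qf (A : SL2Z) (p q : ℤ) : ℤ :=
  p*(A.1 1 0 * p + A.1 1 1 * q) - q*(A.1 0 0 * p + A.1 0 1 * q)

/-- The matrix `x•1 + y•A`. -/
def m2 (A : SL2Z) (x y : ℤ) : Matrix (Fin 2) (Fin 2) ℤ :=
  !![x + y * A.1 0 0, y * A.1 0 1; y * A.1 1 0, x + y * A.1 1 1]

lemma sl2_det (B : SL2Z) : B.1 0 0 * B.1 1 1 - B.1 0 1 * B.1 1 0 = 1 := by
  have := B.2; rw [Matrix.det_fin_two] at this; exact this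

lemma not_coprime_zero_zero : ¬ IsCoprime (0:ℤ) 0 := by
  rw [isCoprime_zero_right]; exact not_isUnit_zero

lemma pair_ne_zero {p q : ℤ} (h : IsCoprime p q) : ¬(p = 0 ∧ q = 0) := by
  rintro ⟨rfl, rfl⟩; exact not_coprime_zero_zero h

lemma par_mult {p q r s : ℤ} (h : IsCoprime p q) (hd : p*s - q*r = 0) :
    ∃ m, r = m*p ∧ s = m*q := by
  obtain ⟨u, v, huv⟩ := h
  exact ⟨u*r + v*s, by linear_combination (-r)*huv - v*hd, by linear_combination (-s)*huv + u*hd⟩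

lemma coprime_par {p q r s : ℤ} (hpq : IsCoprime p q) (hrs : IsCoprime r s)
    (hd : p*s - q*r = 0) : (r = p ∧ s = q) ∨ (r = -p ∧ s = -q) := by
  obtain ⟨m, hm1, hm2⟩ := par_mult hpq hd
  obtain ⟨m', hm1', hm2'⟩ := par_mult (p := r) (q := s) (r := p) (s := q) hrs
    (show r*q - s*p = 0 by linear_combination -hd)
  have hmm : m * m' = 1 := by
    by_cases hp0 : p = 0
    · have hq0 : q ≠ 0 := fun h => pair_ne_zero hpq ⟨hp0, h⟩
      have hqq : q * (m * m') = q * 1 := by linear_combination -hm2' - m' * hm2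
      exact mul_left_cancel₀ hq0 hqq
    · have hpp : p * (m * m') = p * 1 := by linear_combination -hm1' - m' * hm1
      exact mul_left_cancel₀ hp0 hpp
  have : IsUnit m := IsUnit.of_mul_eq_one (a := m) m' hmm
  rcases Int.isUnit_iff.mp this with h1 | h1 <;> subst h1
  · left; constructor <;> simp [hm1, hm2]
  · right; exact ⟨by linarith, by linarith⟩

lemma rat_coprime (x : ℚ) : IsCoprime x.num (x.den : ℤ) := by
  rw [Int.isCoprime_iff_gcd_eq_one]; exact x.reduced

lemma numden {p q : ℤ} (hco : IsCoprime p q) (hq : q ≠ 0) :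
    (((p:ℚ)/q).num = p ∧ ((((p:ℚ)/q).den :ℤ)) = q) ∨
    (((p:ℚ)/q).num = -p ∧ ((((p:ℚ)/q).den :ℤ)) = -q) := by
  set x := (p:ℚ)/q with hx
  have hden : ((x.den:ℤ)) ≠ 0 := by exact_mod_cast x.den_nz
  have hqQ : (q:ℚ) ≠ 0 := by exact_mod_cast hq
  have hcross : (p:ℚ) * (x.den:ℚ) = (x.num:ℚ) * (q:ℚ) := by
    have h1 : (x.num : ℚ) / (x.den : ℚ) = x := Rat.num_div_den x
    rw [hx] at h1
    field_simp at h1 ⊢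
    linear_combination -h1
  have hcrossZ : p * (x.den : ℤ) = x.num * q := by exact_mod_cast hcross
  have h1 : q ∣ (x.den : ℤ) := by
    have : q ∣ p * (x.den:ℤ) := ⟨x.num, by linarith [hcrossZ, mul_comm x.num q]⟩
    exact (IsCoprime.symm hco).dvd_of_dvd_mul_left this
  have h2 : (x.den : ℤ) ∣ q := by
    have : (x.den:ℤ) ∣ x.num * q := ⟨p, by linarith [hcrossZ, mul_comm p (x.den:ℤ)]⟩
    exact ((rat_coprime x).symm).dvd_of_dvd_mul_left this
  obtain ⟨m, hm⟩ := h1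
  obtain ⟨m', hm'⟩ := h2
  have hmm : m * m' = 1 := by
    have : q * (m * m') = q * 1 := by linear_combination -hm' - m' * hm
    exact mul_left_cancel₀ hq this
  rcases Int.isUnit_iff.mp (IsUnit.of_mul_eq_one (a := m) m' hmm) with h | h <;> subst h
  · left
    have hd : (x.den : ℤ) = q := by rw [hm]; ring
    refine ⟨?_, hd⟩
    rw [hd] at hcrossZ
    exact (mul_right_cancel₀ hq hcrossZ).symm
  · right
    have hd : (x.den : ℤ) = -q := by rw [hm]; ring
    refine ⟨?_, hd⟩
    rw [hd] at hcrossZ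
    have h3 : (-p) * q = x.num * q := by linear_combination hcrossZ
    exact (mul_right_cancel₀ hq h3).symm

lemma unit_of_coprime_zero {p : ℤ} (h : IsCoprime p (0:ℤ)) : p = 1 ∨ p = -1 :=
  Int.isUnit_iff.mp (isCoprime_zero_right.mp h)

lemma pt_neg (p q : ℤ) : pt (-p) (-q) = pt p q := by
  unfold pt
  by_cases hq : q = 0
  · simp [hq]
  · rw [if_neg hq, if_neg (by simpa using hq)]
    push_cast
    rw [neg_div_neg_eq]

lemma pt_rep (v : OnePoint ℚ) : ∃ p q : ℤ, IsCoprime p q ∧ pt p q = v := by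
  cases v with
  | infty => exact ⟨1, 0, isCoprime_one_left, by simp [pt]⟩
  | coe x =>
    refine ⟨x.num, (x.den : ℤ), rat_coprime x, ?_⟩
    have hd : ((x.den:ℤ)) ≠ 0 := by exact_mod_cast x.den_nz
    rw [pt, if_neg hd]
    have : (((x.den:ℤ)):ℚ) = (x.den:ℚ) := by push_cast; ring
    rw [this, Rat.num_div_den x]

lemma mob_one (v : OnePoint ℚ) : mob 1 v = v := by
  cases v with
  | infty => simp [mob]
  | coe x => simp [mob]

lemma pt_eq {p q r s : ℤ} (hpq : IsCoprime p q) (hrs : IsCoprime r s)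
    (h : pt p q = pt r s) : (r = p ∧ s = q) ∨ (r = -p ∧ s = -q) := by
  by_cases hq : q = 0 <;> by_cases hs : s = 0
  · subst hq hs
    rcases unit_of_coprime_zero hpq with h1 | h1 <;>
      rcases unit_of_coprime_zero hrs with h2 | h2 <;> subst h1 <;> subst h2
    · left; exact ⟨rfl, rfl⟩
    · right; exact ⟨rfl, by ring⟩
    · right; exact ⟨rfl, by ring⟩
    · left; exact ⟨rfl, rfl⟩
  · exfalso
    rw [pt, if_pos hq, pt, if_neg hs] at h
    exact OnePoint.infty_ne_coe _ h
  · exfalso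
    rw [pt, if_neg hq, pt, if_pos hs] at h
    exact OnePoint.coe_ne_infty _ h
  · rw [pt, if_neg hq, pt, if_neg hs] at h
    have hQ : (p:ℚ)/q = (r:ℚ)/s := OnePoint.coe_eq_coe.mp h
    have hsQ : (s:ℚ) ≠ 0 := by exact_mod_cast hs
    have hqQ : (q:ℚ) ≠ 0 := by exact_mod_cast hq
    rw [div_eq_div_iff hqQ hsQ] at hQ
    refine coprime_par hpq hrs ?_
    have hZ : p*s = r*q := by exact_mod_cast hQ
    rw [sub_eq_zero, mul_comm q r]
    exact hZ

lemma farey_pt {p q r s : ℤ} (hpq : IsCoprime p q) (hrs : IsCoprime r s)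
    (h : fareyAdj (pt p q) (pt r s)) : |p*s - q*r| = 1 := by
  by_cases hq : q = 0 <;> by_cases hs : s = 0
  · exfalso
    rw [pt, if_pos hq, pt, if_pos hs] at h
    simpa [fareyAdj] using h
  · subst hq
    rw [pt, if_pos rfl, pt, if_neg hs] at h
    have hden : ((r:ℚ)/s).den = 1 := by simpa [fareyAdj] using h
    have hs1 : s = 1 ∨ s = -1 := by
      rcases numden hrs hs with ⟨_, h2⟩ | ⟨_, h2⟩ <;> rw [hden] at h2 <;> omega
    rcases unit_of_coprime_zero hpq with h1 | h1 <;> rcases hs1 with h2 | h2 <;>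
      subst h1 <;> subst h2 <;> norm_num
  · subst hs
    rw [pt, if_neg hq, pt, if_pos rfl] at h
    have hden : ((p:ℚ)/q).den = 1 := by simpa [fareyAdj] using h
    have hq1 : q = 1 ∨ q = -1 := by
      rcases numden hpq hq with ⟨_, h2⟩ | ⟨_, h2⟩ <;> rw [hden] at h2 <;> omega
    rcases unit_of_coprime_zero hrs with h1 | h1 <;> rcases hq1 with h2 | h2 <;>
      subst h1 <;> subst h2 <;> norm_num
  · rw [pt, if_neg hq, pt, if_neg hs] at h
    have hF : |((p:ℚ)/q).num * ((((r:ℚ)/s).den):ℤ) - (((p:ℚ)/q).den:ℤ) * ((r:ℚ)/s).num| = 1 := by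
      simpa [fareyAdj] using h
    rcases numden hpq hq with ⟨h1, h2⟩ | ⟨h1, h2⟩ <;>
      rcases numden hrs hs with ⟨h3, h4⟩ | ⟨h3, h4⟩ <;>
        rw [h1, h2, h3, h4] at hF
    · exact hF
    · rw [show p * -s - q * -r = -(p*s - q*r) by ring, abs_neg] at hF; exact hF
    · rw [show -p * s - -q * r = -(p*s - q*r) by ring, abs_neg] at hF; exact hF
    · rw [show -p * -s - -q * -r = p*s - q*r by ring] at hF; exact hF

lemma mob_pt (B : SL2Z) {p q : ℤ} (h : ¬(p = 0 ∧ q = 0)) :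
    mob B (pt p q) = pt (B.1 0 0 * p + B.1 0 1 * q) (B.1 1 0 * p + B.1 1 1 * q) := by
  by_cases hq : q = 0
  · have hp : p ≠ 0 := fun hp => h ⟨hp, hq⟩
    have hpQ : (p:ℚ) ≠ 0 := by exact_mod_cast hp
    subst hq
    rw [pt, if_pos rfl]
    show mob B OnePoint.infty = _
    simp only [mob]
    by_cases hc : (B.1 1 0 : ℚ) = 0
    · have hcz : B.1 1 0 = 0 := by exact_mod_cast hc
      rw [if_pos hc, pt, if_pos (by rw [hcz]; ring)]
    · have hcz : B.1 1 0 ≠ 0 := fun h0 => hc (by exact_mod_cast h0)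
      rw [if_neg hc, pt, if_neg (by simpa [hp] using mul_ne_zero hcz hp)]
      congr 1
      push_cast
      rw [mul_zero, add_zero, mul_zero, add_zero]
      field_simp
  · have hqQ : (q:ℚ) ≠ 0 := by exact_mod_cast hq
    rw [pt, if_neg hq]
    show mob B (OnePoint.some _) = _
    simp only [mob]
    have key : ((B.1 1 0 * p + B.1 1 1 * q : ℤ):ℚ)
        = ((B.1 1 0:ℚ) * ((p:ℚ)/q) + (B.1 1 1:ℚ)) * q := by
      push_cast; field_simp
    by_cases hden : (B.1 1 0 : ℚ) * ((p:ℚ)/q) + (B.1 1 1 : ℚ) = 0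
    · have hz : B.1 1 0 * p + B.1 1 1 * q = 0 := by
        have : ((B.1 1 0 * p + B.1 1 1 * q : ℤ):ℚ) = 0 := by rw [key, hden, zero_mul]
        exact_mod_cast this
      rw [if_pos hden, pt, if_pos hz]
    · have hz : B.1 1 0 * p + B.1 1 1 * q ≠ 0 := by
        intro h0
        apply hden
        have h1 : ((B.1 1 0 * p + B.1 1 1 * q : ℤ):ℚ) = 0 := by exact_mod_cast h0
        rw [key] at h1
        rcases mul_eq_zero.mp h1 with h2 | h2
        · exact h2
        · exact absurd h2 hqQ
      rw [if_neg hden, pt, if_neg hz]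
      congr 1
      have hdenQ : (B.1 1 0:ℚ) * ((p:ℚ)/q) + (B.1 1 1:ℚ) ≠ 0 := hden
      push_cast
      rw [div_eq_div_iff hdenQ]
      · field_simp
        try ring
      · intro h0
        apply hz
        have h1 : ((B.1 1 0 * p + B.1 1 1 * q : ℤ):ℚ) = 0 := by push_cast; linear_combination h0
        exact_mod_cast h1

lemma step_mul (A : SL2Z) (x y : ℤ) :
    A.1 * (m2 A x y) = m2 A (-y) (x + (A.1 0 0 + A.1 1 1)*y) := by
  have hdet := sl2_det A
  rw [← Matrix.ext_iff]
  rw [Fin.forall_fin_two]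
  constructor <;> rw [Fin.forall_fin_two] <;> constructor <;>
    simp [m2, Matrix.mul_apply, Fin.sum_univ_two]
  · linear_combination (-y) * hdet
  · ring
  · ring
  · linear_combination (-y) * hdet

lemma inv_coe_mul (A : SL2Z) : (A⁻¹ : SL2Z).1 * A.1 = 1 := by
  rw [← Matrix.SpecialLinearGroup.coe_mul, inv_mul_cancel,
    Matrix.SpecialLinearGroup.coe_one]

lemma descent (A : SL2Z) (N : ℕ) : ∀ x y : ℤ, x.natAbs + y.natAbs ≤ N →
    x^2 + (A.1 0 0 + A.1 1 1)*x*y + y^2 = 1 →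
    ∃ n : ℤ, m2 A x y = ((A^n : SL2Z) : Matrix (Fin 2) (Fin 2) ℤ)
      ∨ m2 A x y = -((A^n : SL2Z) : Matrix (Fin 2) (Fin 2) ℤ) := by
  induction N with
  | zero =>
    intro x y hN heq
    have hx : x = 0 := by omega
    have hy : y = 0 := by omega
    rw [hx, hy] at heq; norm_num at heq
  | succ N ih =>
    intro x y hN heq
    set t : ℤ := A.1 0 0 + A.1 1 1 with ht
    by_cases hy : y = 0
    · subst hy
      have h1 : (x - 1) * (x + 1) = 0 := by linear_combination heq
      refine ⟨0, ?_⟩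
      rcases mul_eq_zero.mp h1 with h | h
      · left
        have hx1 : x = 1 := by linarith
        subst hx1
        rw [zpow_zero, Matrix.SpecialLinearGroup.coe_one]
        ext i j
        fin_cases i <;> fin_cases j <;> simp [m2, Matrix.one_apply]
      · right
        have hx1 : x = -1 := by linarith
        subst hx1
        rw [zpow_zero, Matrix.SpecialLinearGroup.coe_one]
        ext i j
        fin_cases i <;> fin_cases j <;> simp [m2, Matrix.one_apply]
    · by_cases hx : x = 0
      · subst hx
        have h1 : (y - 1) * (y + 1) = 0 := by linear_combination heq
        refine ⟨1, ?_⟩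
        rcases mul_eq_zero.mp h1 with h | h
        · left
          have hy1 : y = 1 := by linarith
          subst hy1
          rw [zpow_one]
          ext i j
          fin_cases i <;> fin_cases j <;> simp [m2]
        · right
          have hy1 : y = -1 := by linarith
          subst hy1
          rw [zpow_one]
          ext i j
          fin_cases i <;> fin_cases j <;> simp [m2]
      · have hy2 : 1 ≤ y^2 := by rcases lt_or_gt_of_ne hy with h | h <;> nlinarith
        have hx2 : 1 ≤ x^2 := by rcases lt_or_gt_of_ne hx with h | h <;> nlinarith
        have hxa : 0 < |x| := abs_pos.mpr hx
        have hya : 0 < |y| := abs_pos.mpr hy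
        by_cases hxy : y.natAbs ≤ x.natAbs
        · have hyx : |y| ≤ |x| := by
            rw [Int.abs_eq_natAbs, Int.abs_eq_natAbs]; exact_mod_cast hxy
          have key : x * (x + t*y) = 1 - y^2 := by linear_combination heq
          have habs : |x| * |x + t*y| = y^2 - 1 := by
            rw [← abs_mul, key, abs_of_nonpos (by linarith), neg_sub]
          have hlt : |x + t*y| < |y| := by nlinarith [sq_abs y, abs_nonneg (x + t*y)]
          have hltn : (x + t*y).natAbs < y.natAbs := by
            rw [Int.abs_eq_natAbs, Int.abs_eq_natAbs] at hlt; exact_mod_cast hlt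
          have heq' : (-y)^2 + t*(-y)*(x + t*y) + (x + t*y)^2 = 1 := by linear_combination heq
          obtain ⟨n, hn⟩ := ih (-y) (x + t*y) (by omega) heq'
          refine ⟨n - 1, ?_⟩
          have hstep : A.1 * m2 A x y = m2 A (-y) (x + t*y) := step_mul A x y
          have hpow : ((A^(n-1) : SL2Z) : Matrix (Fin 2) (Fin 2) ℤ)
              = (A⁻¹ : SL2Z).1 * ((A^n : SL2Z) : Matrix (Fin 2) (Fin 2) ℤ) := by
            rw [← Matrix.SpecialLinearGroup.coe_mul]
            congr 1
            have h2 : A^(n-1) = A^(-1 : ℤ) * A^n := by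
              rw [← _root_.zpow_add]; congr 1; ring
            rw [h2, _root_.zpow_neg_one]
          rcases hn with hn | hn
          · left
            rw [hpow, ← hn, ← hstep, ← mul_assoc, inv_coe_mul, one_mul]
          · right
            rw [hpow, show -((A⁻¹ : SL2Z).1 * ((A^n : SL2Z) : Matrix (Fin 2) (Fin 2) ℤ))
                = (A⁻¹ : SL2Z).1 * (-((A^n : SL2Z) : Matrix (Fin 2) (Fin 2) ℤ)) by rw [mul_neg],
              ← hn, ← hstep, ← mul_assoc, inv_coe_mul, one_mul]
        · have hyx : |x| < |y| := by
            rw [Int.abs_eq_natAbs, Int.abs_eq_natAbs]; exact_mod_cast Nat.lt_of_not_le hxy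
          have key : y * (t*x + y) = 1 - x^2 := by linear_combination heq
          have habs : |y| * |t*x + y| = x^2 - 1 := by
            rw [← abs_mul, key, abs_of_nonpos (by linarith), neg_sub]
          have hlt : |t*x + y| < |x| := by nlinarith [sq_abs x, abs_nonneg (t*x + y)]
          have hltn : (t*x + y).natAbs < x.natAbs := by
            rw [Int.abs_eq_natAbs, Int.abs_eq_natAbs] at hlt; exact_mod_cast hlt
          have hxyn : x.natAbs < y.natAbs := Nat.lt_of_not_le hxy
          have heq' : (t*x + y)^2 + t*(t*x + y)*(-x) + (-x)^2 = 1 := by linear_combination heq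
          obtain ⟨n, hn⟩ := ih (t*x + y) (-x) (by omega) heq'
          refine ⟨1 + n, ?_⟩
          have hstep : A.1 * m2 A (t*x + y) (-x) = m2 A x y := by
            rw [step_mul]
            have e1 : (-(-x) : ℤ) = x := by ring
            have e2 : (t*x + y) + (A.1 0 0 + A.1 1 1)*(-x) = y := by rw [← ht]; ring
            rw [e1, e2]
          have hpow : ((A^(1 + n) : SL2Z) : Matrix (Fin 2) (Fin 2) ℤ)
              = A.1 * ((A^n : SL2Z) : Matrix (Fin 2) (Fin 2) ℤ) := by
            rw [← Matrix.SpecialLinearGroup.coe_mul]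
            congr 1
            have h2 : A^(1+n) = A^(1 : ℤ) * A^n := _root_.zpow_add A 1 n
            rw [h2, zpow_one]
          rcases hn with hn | hn
          · left
            rw [hpow, ← hstep, hn]
          · right
            rw [hpow, ← hstep, hn, mul_neg]

/-- transitivity on a class `Qf = ε`, `ε = ±1` -/
lemma trans_eps (A : SL2Z) {p q r s ε : ℤ} (hε : ε = 1 ∨ ε = -1)
    (h1 : Qf A p q = ε) (h2 : Qf A r s = ε) :
    ∃ n : ℤ, mob (A^n) (pt p q) = pt r s := by
  have hdet := sl2_det A
  set a := A.1 0 0 with ha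
  set b := A.1 0 1 with hb
  set c := A.1 1 0 with hc
  set d := A.1 1 1 with hd
  have hε2 : ε * ε = 1 := by rcases hε with rfl | rfl <;> norm_num
  have h1' : p*(c*p + d*q) - q*(a*p + b*q) = ε := h1
  have h2' : r*(c*r + d*s) - s*(a*r + b*s) = ε := h2
  set x : ℤ := ε*(r*(c*p+d*q) - s*(a*p+b*q)) with hx
  set y : ℤ := ε*(p*s - q*r) with hy
  have hr : x*p + y*(a*p + b*q) = r := by
    rw [hx, hy]; linear_combination (ε*r)*h1' + r*hε2
  have hs : x*q + y*(c*p + d*q) = s := by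
    rw [hx, hy]; linear_combination (ε*s)*h1' + s*hε2
  -- the norm equation
  have hI1 : (x*p + y*(a*p+b*q))*(c*(x*p + y*(a*p+b*q)) + d*(x*q + y*(c*p+d*q)))
      - (x*q + y*(c*p+d*q))*(a*(x*p + y*(a*p+b*q)) + b*(x*q + y*(c*p+d*q)))
      = (x^2 + (a+d)*x*y + y^2) * (p*(c*p + d*q) - q*(a*p + b*q)) := by
    linear_combination (y^2*(p*(c*p + d*q) - q*(a*p + b*q))) * hdet
  rw [hr, hs, h2', h1'] at hI1
  have hnorm : x^2 + (a+d)*x*y + y^2 = 1 := by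
    rcases hε with rfl | rfl
    · linarith [hI1]
    · nlinarith [hI1]
  obtain ⟨n, hn⟩ := descent A (x.natAbs + y.natAbs) x y le_rfl hnorm
  have hnz : ¬(p = 0 ∧ q = 0) := by
    rintro ⟨rfl, rfl⟩
    rcases hε with rfl | rfl <;> simp [Qf] at h1
  refine ⟨n, ?_⟩
  rw [mob_pt (A^n) hnz]
  rcases hn with hn | hn
  · have e00 : (A^n : SL2Z).1 0 0 = x + y*a := by rw [← hn]; simp [m2, ha, hb, hc, hd]
    have e01 : (A^n : SL2Z).1 0 1 = y*b := by rw [← hn]; simp [m2, ha, hb, hc, hd]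
    have e10 : (A^n : SL2Z).1 1 0 = y*c := by rw [← hn]; simp [m2, ha, hb, hc, hd]
    have e11 : (A^n : SL2Z).1 1 1 = x + y*d := by rw [← hn]; simp [m2, ha, hb, hc, hd]
    rw [e00, e01, e10, e11,
      show (x + y*a)*p + (y*b)*q = r by linear_combination hr,
      show (y*c)*p + (x + y*d)*q = s by linear_combination hs]
  · have hmn : ((A^n : SL2Z) : Matrix (Fin 2) (Fin 2) ℤ) = -(m2 A x y) := by
      rw [hn, neg_neg]
    have e00 : (A^n : SL2Z).1 0 0 = -(x + y*a) := by rw [hmn]; simp [m2, ha, hb, hc, hd]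
    have e01 : (A^n : SL2Z).1 0 1 = -(y*b) := by rw [hmn]; simp [m2, ha, hb, hc, hd]
    have e10 : (A^n : SL2Z).1 1 0 = -(y*c) := by rw [hmn]; simp [m2, ha, hb, hc, hd]
    have e11 : (A^n : SL2Z).1 1 1 = -(x + y*d) := by rw [hmn]; simp [m2, ha, hb, hc, hd]
    rw [e00, e01, e10, e11,
      show (-(x + y*a))*p + (-(y*b))*q = -r by linear_combination -hr,
      show (-(y*c))*p + (-(x + y*d))*q = -s by linear_combination -hs,
      pt_neg]

/-- a primitive vector with `Qf = 0` is a `±1`-eigenvector -/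
lemma fix_k (A : SL2Z) {p q : ℤ} (hpq : IsCoprime p q) (h1 : Qf A p q = 0) :
    ∃ k : ℤ, (k = 1 ∨ k = -1) ∧ (A.1 0 0*p + A.1 0 1*q = k*p) ∧
      (A.1 1 0*p + A.1 1 1*q = k*q) ∧ k*((A.1 0 0 + A.1 1 1)-k) = 1 := by
  have hdet := sl2_det A
  set a := A.1 0 0
  set b := A.1 0 1
  set c := A.1 1 0
  set d := A.1 1 1
  obtain ⟨k, hP, hQ⟩ := par_mult hpq h1
  have hadj1 : k*(d*p - b*q) = p := by linear_combination (-d)*hP + b*hQ + p*hdet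
  have hadj2 : k*(a*q - c*p) = q := by linear_combination c*hP - a*hQ + q*hdet
  have keqp : (k*((a+d)-k) - 1)*p = 0 := by linear_combination k*hP + hadj1
  have keqq : (k*((a+d)-k) - 1)*q = 0 := by linear_combination k*hQ + hadj2
  have keq : k*((a+d)-k) = 1 := by
    by_cases hp0 : p = 0
    · have hq0 : q ≠ 0 := fun h => pair_ne_zero hpq ⟨hp0, h⟩
      rcases mul_eq_zero.mp keqq with h | h
      · linarith
      · exact absurd h hq0
    · rcases mul_eq_zero.mp keqp with h | h
      · linarith
      · exact absurd h hp0
  exact ⟨k, Int.isUnit_iff.mp (IsUnit.of_mul_eq_one _ keq), hP, hQ, keq⟩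

/-- there is at most one point with `Qf = 0` -/
lemma fix_eq (A : SL2Z) (hA1 : A ≠ 1) (hA2 : A ≠ -1) {p q r s : ℤ}
    (hpq : IsCoprime p q) (hrs : IsCoprime r s)
    (h1 : Qf A p q = 0) (h2 : Qf A r s = 0) : pt p q = pt r s := by
  have hdet := sl2_det A
  set a := A.1 0 0 with ha
  set b := A.1 0 1 with hb
  set c := A.1 1 0 with hc
  set d := A.1 1 1 with hd
  obtain ⟨k, hk, hP, hQ, keq⟩ := fix_k A hpq h1
  obtain ⟨k', hk', hP', hQ', keq'⟩ := fix_k A hrs h2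
  have hkk : k' = k := by
    rcases hk with rfl | rfl <;> rcases hk' with rfl | rfl <;> omega
  rw [hkk] at hP' hQ' keq'
  by_cases he : p*s - q*r = 0
  · rcases coprime_par hpq hrs he with ⟨hr1, hr2⟩ | ⟨hr1, hr2⟩
    · rw [hr1, hr2]
    · rw [hr1, hr2, pt_neg]
  · exfalso
    have hb0 : b = 0 := by
      have hbe : b*(p*s - q*r) = 0 := by linear_combination p*hP' - r*hP
      rcases mul_eq_zero.mp hbe with h | h
      · exact h
      · exact absurd h he
    have hc0 : c = 0 := by
      have hce : c*(p*s - q*r) = 0 := by linear_combination s*hQ - q*hQ'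
      rcases mul_eq_zero.mp hce with h | h
      · exact h
      · exact absurd h he
    have hak : a = k := by
      have hae : (a-k)*(p*s - q*r) = 0 := by linear_combination s*hP - q*hP'
      rcases mul_eq_zero.mp hae with h | h
      · linarith
      · exact absurd h he
    have hdk : d = k := by
      have hde : (d-k)*(p*s - q*r) = 0 := by linear_combination p*hQ' - r*hQ
      rcases mul_eq_zero.mp hde with h | h
      · linarith
      · exact absurd h he
    rcases hk with rfl | rfl
    · apply hA1
      apply Subtype.ext
      rw [Matrix.SpecialLinearGroup.coe_one, ← Matrix.ext_iff, Fin.forall_fin_two]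
      constructor <;> rw [Fin.forall_fin_two] <;> constructor <;>
        simp [Matrix.one_apply, ← ha, ← hb, ← hc, ← hd, hak, hdk, hb0, hc0]
    · apply hA2
      apply Subtype.ext
      have hco : ((-1 : SL2Z) : Matrix (Fin 2) (Fin 2) ℤ) = -1 := by
        simp
      rw [hco, ← Matrix.ext_iff, Fin.forall_fin_two]
      constructor <;> rw [Fin.forall_fin_two] <;> constructor <;>
        simp [Matrix.one_apply, ← ha, ← hb, ← hc, ← hd, hak, hdk, hb0, hc0]

/-- not all three values `0, 1, -1` can be attained -/
lemma not_all_three (A : SL2Z) {p q r s u v : ℤ} (hpq : IsCoprime p q)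
    (h1 : Qf A p q = 0) (h2 : Qf A r s = 1) (h3 : Qf A u v = -1) : False := by
  have hdet := sl2_det A
  set a := A.1 0 0
  set b := A.1 0 1
  set c := A.1 1 0
  set d := A.1 1 1
  obtain ⟨k, hk, hP, hQ, keq⟩ := fix_k A hpq h1
  have htt : (a+d)^2 = 4 := by rcases hk with rfl | rfl <;> nlinarith [keq]
  have h2' : r*(c*r + d*s) - s*(a*r + b*s) = 1 := h2
  have h3' : u*(c*u + d*v) - v*(a*u + b*v) = -1 := h3
  have h4c : 4*c = (2*c*r + (d-a)*s)^2 := by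
    linear_combination (-4*c)*h2' - s^2*htt + 4*s^2*hdet
  have hm4c : -(4*c) = (2*c*u + (d-a)*v)^2 := by
    linear_combination (-4*c)*h3' - v^2*htt + 4*v^2*hdet
  have hcge : 0 ≤ 4*c := by rw [h4c]; exact sq_nonneg _
  have hcle : 0 ≤ -(4*c) := by rw [hm4c]; exact sq_nonneg _
  have hc0 : c = 0 := by linarith
  have hX : 2*c*r + (d-a)*s = 0 := by
    have h5 : (2*c*r + (d-a)*s)^2 = 0 := by linarith
    exact pow_eq_zero_iff (n := 2) (by norm_num) |>.mp h5
  have hY : 2*c*u + (d-a)*v = 0 := by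
    have h5 : (2*c*u + (d-a)*v)^2 = 0 := by linarith
    exact pow_eq_zero_iff (n := 2) (by norm_num) |>.mp h5
  have hX0 : (d-a)*s = 0 := by linear_combination hX - 2*r*hc0
  have hY0 : (d-a)*v = 0 := by linear_combination hY - 2*u*hc0
  have hbs : -(b*s^2) = 1 := by linear_combination h2' - r^2*hc0 - r*hX0
  have hbv : b*v^2 = 1 := by linear_combination -h3' + u^2*hc0 + u*hY0
  have hmul : (-(b*s^2)) * (b*v^2) = 1 := by rw [hbs, hbv]; norm_num
  nlinarith [hmul, sq_nonneg (b*s*v)]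

lemma Aprim (A : SL2Z) {p q : ℤ} (hco : IsCoprime p q) :
    IsCoprime (A.1 0 0 * p + A.1 0 1 * q) (A.1 1 0 * p + A.1 1 1 * q) := by
  have hdet := sl2_det A
  obtain ⟨x, y, hxy⟩ := hco
  exact ⟨x*A.1 1 1 - y*A.1 1 0, y*A.1 0 0 - x*A.1 0 1,
    by linear_combination hxy + (x*p + y*q)*hdet⟩

/-- classification: points moved to an equal or adjacent point have `Qf ∈ {0, 1, -1}` -/
lemma classify (A : SL2Z) {p q : ℤ} (hco : IsCoprime p q)
    (h : mob A (pt p q) = pt p q ∨ fareyAdj (mob A (pt p q)) (pt p q)) :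
    Qf A p q = 0 ∨ Qf A p q = 1 ∨ Qf A p q = -1 := by
  have hnz : ¬(p = 0 ∧ q = 0) := pair_ne_zero hco
  rw [mob_pt A hnz] at h
  have hAco := Aprim A hco
  rcases h with h | h
  · left
    show p*(A.1 1 0*p + A.1 1 1*q) - q*(A.1 0 0*p + A.1 0 1*q) = 0
    rcases pt_eq hAco hco h with ⟨e1, e2⟩ | ⟨e1, e2⟩
    · linear_combination (-p)*e2 + q*e1
    · linear_combination p*e2 - q*e1
  · have habs : |(A.1 0 0 * p + A.1 0 1 * q)*q - (A.1 1 0 * p + A.1 1 1 * q)*p| = 1 :=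
      farey_pt hAco hco h
    have hQ : Qf A p q = -((A.1 0 0 * p + A.1 0 1 * q)*q - (A.1 1 0 * p + A.1 1 1 * q)*p) := by
      show p*(A.1 1 0*p + A.1 1 1*q) - q*(A.1 0 0*p + A.1 0 1*q) = _
      ring
    rcases (abs_eq (by norm_num : (0:ℤ) ≤ 1)).mp habs with h' | h'
    · right; right; rw [hQ, h']
    · right; left; rw [hQ, h']; ring

theorem at_most_two_classes (A : SL2Z) (hA1 : A ≠ 1) (hA2 : A ≠ -1) :
    ∃ v₁ v₂ : OnePoint ℚ, ∀ v : OnePoint ℚ,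
      (mob A v = v ∨ fareyAdj (mob A v) v) →
      ((∃ n : ℤ, mob (A ^ n) v₁ = v) ∨ (∃ n : ℤ, mob (A ^ n) v₂ = v)) := by
  classical
  -- reach lemmas
  have reach0 : ∀ {p q r s : ℤ}, IsCoprime p q → IsCoprime r s → Qf A p q = 0 → Qf A r s = 0 →
      ∃ n : ℤ, mob (A^n) (pt p q) = pt r s := by
    intro p q r s hpq hrs h1 h2
    exact ⟨0, by rw [zpow_zero, mob_one, fix_eq A hA1 hA2 hpq hrs h1 h2]⟩
  by_cases h0 : ∃ p q : ℤ, IsCoprime p q ∧ Qf A p q = 0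
  · obtain ⟨p₀, q₀, hco₀, hQ₀⟩ := h0
    by_cases hpos : ∃ p q : ℤ, IsCoprime p q ∧ Qf A p q = 1
    · obtain ⟨p₁, q₁, hco₁, hQ₁⟩ := hpos
      refine ⟨pt p₀ q₀, pt p₁ q₁, ?_⟩
      intro v hv
      obtain ⟨p, q, hco, hpt⟩ := pt_rep v
      rw [← hpt] at hv ⊢
      rcases classify A hco hv with h | h | h
      · exact Or.inl (reach0 hco₀ hco hQ₀ h)
      · exact Or.inr (trans_eps A (Or.inl rfl) hQ₁ h)
      · exact absurd (not_all_three A hco₀ hQ₀ hQ₁ h) id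
    · refine ⟨pt p₀ q₀, if h : ∃ p q : ℤ, IsCoprime p q ∧ Qf A p q = -1 then
        pt h.choose h.choose_spec.choose else OnePoint.infty, ?_⟩
      intro v hv
      obtain ⟨p, q, hco, hpt⟩ := pt_rep v
      rw [← hpt] at hv ⊢
      rcases classify A hco hv with h | h | h
      · exact Or.inl (reach0 hco₀ hco hQ₀ h)
      · exact absurd ⟨p, q, hco, h⟩ hpos
      · have hex : ∃ p q : ℤ, IsCoprime p q ∧ Qf A p q = -1 := ⟨p, q, hco, h⟩
        right
        rw [dif_pos hex]
        exact trans_eps A (Or.inr rfl) hex.choose_spec.choose_spec.2 h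
  · refine ⟨if h : ∃ p q : ℤ, IsCoprime p q ∧ Qf A p q = 1 then
        pt h.choose h.choose_spec.choose else OnePoint.infty,
      if h : ∃ p q : ℤ, IsCoprime p q ∧ Qf A p q = -1 then
        pt h.choose h.choose_spec.choose else OnePoint.infty, ?_⟩
    intro v hv
    obtain ⟨p, q, hco, hpt⟩ := pt_rep v
    rw [← hpt] at hv ⊢
    rcases classify A hco hv with h | h | h
    · exact absurd ⟨p, q, hco, h⟩ h0
    · have hex : ∃ p q : ℤ, IsCoprime p q ∧ Qf A p q = 1 := ⟨p, q, hco, h⟩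
      left
      rw [dif_pos hex]
      exact trans_eps A (Or.inl rfl) hex.choose_spec.choose_spec.2 h
    · have hex : ∃ p q : ℤ, IsCoprime p q ∧ Qf A p q = -1 := ⟨p, q, hco, h⟩
      right
      rw [dif_pos hex]
      exact trans_eps A (Or.inr rfl) hex.choose_spec.choose_spec.2 h
end

section
/- Let A ∈ SL(2,ℤ) with A ≠ I and A ≠ −I, and suppose A has finite order in PSL(2,ℤ), i.e. Aᵏ = I or Aᵏ = −I for some integer k ≥ 1. Then the set of points v ∈ ℚ ∪ {∞} such that A·v = v or A·v is Farey-adjacent to v is contained in a single A-equivalence class (a single orbit of the cyclic group generated by A). -/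
open OnePoint Matrix

namespace FGAux

/-- The primitive integer vector representing a point of `ℚ ∪ {∞}`. -/
def vec : OnePoint ℚ → ℤ × ℤ
  | OnePoint.infty => (1, 0)
  | OnePoint.some x => (x.num, (x.den : ℤ))

lemma vec_den_nonneg (v : OnePoint ℚ) : 0 ≤ (vec v).2 := by
  induction v using OnePoint.rec with
  | infty => simp [vec]
  | coe x => simp [vec]
  -- note: coe = OnePoint.some

lemma vec_den_zero {v : OnePoint ℚ} (h : (vec v).2 = 0) : (vec v).1 = 1 := by
  induction v using OnePoint.rec with
  | infty => simp [vec]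
  | coe x =>
      exfalso
      simp only [vec] at h
      exact x.den_nz (by exact_mod_cast h)

lemma vec_coprime (v : OnePoint ℚ) : IsCoprime (vec v).1 (vec v).2 := by
  induction v using OnePoint.rec with
  | infty => exact isCoprime_one_left
  | coe x =>
      refine Int.isCoprime_iff_gcd_eq_one.mpr ?_
      simpa [vec, Int.gcd, Int.natAbs_natCast] using x.reduced

lemma vec_inj {v w : OnePoint ℚ} (h : vec v = vec w) : v = w := by
  induction v using OnePoint.rec with
  | infty =>
      induction w using OnePoint.rec with
      | infty => rfl
      | coe y =>
          exfalso
          simp only [vec, Prod.ext_iff] at h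
          exact y.den_nz (by exact_mod_cast h.2.symm)
  | coe x =>
      induction w using OnePoint.rec with
      | infty =>
          exfalso
          simp only [vec, Prod.ext_iff] at h
          exact x.den_nz (by exact_mod_cast h.2)
      | coe y =>
          simp only [vec, Prod.ext_iff] at h
          have hden : x.den = y.den := by exact_mod_cast h.2
          exact congrArg OnePoint.some (Rat.ext h.1 hden)

lemma vec_sign {v w : OnePoint ℚ} {y : ℤ × ℤ} {e1 e2 : ℤ}
    (he1 : e1 = 1 ∨ e1 = -1) (he2 : e2 = 1 ∨ e2 = -1)
    (h1 : vec v = (e1 * y.1, e1 * y.2)) (h2 : vec w = (e2 * y.1, e2 * y.2)) :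
    v = w := by
  apply vec_inj
  have hv2 := vec_den_nonneg v
  have hw2 := vec_den_nonneg w
  have hv0 := @vec_den_zero v
  have hw0 := @vec_den_zero w
  rw [Prod.ext_iff] at h1 h2 ⊢
  rcases he1 with rfl | rfl <;> rcases he2 with rfl | rfl <;>
    [skip; skip; skip; skip] <;> omega

/-- The linear action of a matrix on integer vectors. -/
def act (B : SL2Z) (z : ℤ × ℤ) : ℤ × ℤ :=
  (B.1 0 0 * z.1 + B.1 0 1 * z.2, B.1 1 0 * z.1 + B.1 1 1 * z.2)

lemma det_entries (B : SL2Z) : B.1 0 0 * B.1 1 1 - B.1 0 1 * B.1 1 0 = 1 := by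
  have h := B.2
  rwa [Matrix.det_fin_two] at h

lemma act_coprime (B : SL2Z) {z : ℤ × ℤ} (h : IsCoprime z.1 z.2) :
    IsCoprime (act B z).1 (act B z).2 := by
  obtain ⟨u, v, huv⟩ := h
  have hdet := det_entries B
  exact ⟨u * B.1 1 1 - v * B.1 1 0, -(u * B.1 0 1) + v * B.1 0 0, by
    simp only [act]
    linear_combination (u * z.1 + v * z.2) * hdet + huv⟩

lemma num_den_div {p q : ℤ} (hq : 0 < q) (h : IsCoprime p q) :
    ((p : ℚ) / (q : ℚ)).num = p ∧ (((p : ℚ) / (q : ℚ)).den : ℤ) = q := by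
  have hco : Nat.Coprime p.natAbs q.natAbs := by
    have := Int.isCoprime_iff_gcd_eq_one.mp h
    simpa [Int.gcd] using this
  exact ⟨Rat.num_div_eq_of_coprime hq hco, Rat.den_div_eq_of_coprime hq hco⟩

lemma vec_mob (B : SL2Z) (v : OnePoint ℚ) :
    ∃ e : ℤ, (e = 1 ∨ e = -1) ∧
      vec (mob B v) = (e * (act B (vec v)).1, e * (act B (vec v)).2) := by
  have hdet := det_entries B
  induction v using OnePoint.rec with
  | infty =>
      have hact : act B (vec ∞) = (B.1 0 0, B.1 1 0) := by
        simp [act, vec]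
      rw [hact]
      by_cases hc : (B.1 1 0 : ℚ) = 0
      · have hc' : B.1 1 0 = 0 := by exact_mod_cast hc
        have hunit : B.1 0 0 = 1 ∨ B.1 0 0 = -1 := by
          have : B.1 0 0 * B.1 1 1 = 1 := by rw [hc'] at hdet; linarith
          exact Int.isUnit_iff.mp (IsUnit.of_mul_eq_one _ this)
        refine ⟨B.1 0 0, hunit, ?_⟩
        have : mob B ∞ = ∞ := by simp [mob, hc]
        rw [this]
        have h1 : B.1 0 0 * B.1 0 0 = 1 := by rcases hunit with h | h <;> rw [h] <;> ring
        simp [vec, hc', h1]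
      · have hc' : B.1 1 0 ≠ 0 := fun h => hc (by exact_mod_cast h)
        have hmob : mob B ∞ = OnePoint.some ((B.1 0 0 : ℚ) / (B.1 1 0 : ℚ)) := by
          simp [mob, hc]
        have hcop : IsCoprime (B.1 0 0) (B.1 1 0) := by
          have := act_coprime B (z := (1, 0)) isCoprime_one_left
          simpa [act] using this
        rcases lt_or_gt_of_ne hc' with hneg | hpos
        · refine ⟨-1, Or.inr rfl, ?_⟩
          rw [hmob]
          have heq : (B.1 0 0 : ℚ) / (B.1 1 0 : ℚ) =
              ((-(B.1 0 0) : ℤ) : ℚ) / ((-(B.1 1 0) : ℤ) : ℚ) := by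
            push_cast; rw [div_neg, neg_div, neg_neg]
          obtain ⟨h1, h2⟩ := num_den_div (p := -(B.1 0 0)) (q := -(B.1 1 0))
            (by omega) (hcop.neg_left.neg_right)
          rw [heq]
          simp only [vec, Prod.ext_iff]
          constructor
          · rw [h1]; ring
          · rw [h2]; ring
        · refine ⟨1, Or.inl rfl, ?_⟩
          rw [hmob]
          obtain ⟨h1, h2⟩ := num_den_div (p := B.1 0 0) (q := B.1 1 0) hpos hcop
          simp only [vec, Prod.ext_iff]
          constructor
          · rw [h1]; ring
          · rw [h2]; ring
  | coe x =>
      set p := x.num with hp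
      set q := (x.den : ℤ) with hq
      have hq0 : 0 < q := by rw [hq]; exact_mod_cast x.pos
      have hxpq : (x : ℚ) = (p : ℚ) / (q : ℚ) := by
        rw [hp, hq]; push_cast; exact (Rat.num_div_den x).symm
      have hvec : vec (OnePoint.some x) = (p, q) := rfl
      set p' := B.1 0 0 * p + B.1 0 1 * q with hp'
      set q' := B.1 1 0 * p + B.1 1 1 * q with hq'
      have hact : act B (vec (OnePoint.some x)) = (p', q') := rfl
      rw [hact]
      have hcop' : IsCoprime p' q' := by
        have := act_coprime B (z := (p, q)) (by rw [← hvec]; exact vec_coprime _)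
        simpa [act, ← hp', ← hq'] using this
      have hqQ : (q : ℚ) ≠ 0 := by exact_mod_cast hq0.ne'
      have hden : (B.1 1 0 : ℚ) * x + (B.1 1 1 : ℚ) = (q' : ℚ) / (q : ℚ) := by
        rw [hxpq, hq']; push_cast; field_simp
      by_cases hczero : (B.1 1 0 : ℚ) * x + (B.1 1 1 : ℚ) = 0
      · have hq'0 : q' = 0 := by
          have : (q' : ℚ) = 0 := by
            rw [hden, div_eq_zero_iff] at hczero; exact hczero.resolve_right hqQ
          exact_mod_cast this
        have hmob : mob B (OnePoint.some x) = ∞ := by simp [mob, hczero]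
        have hunit : p' = 1 ∨ p' = -1 := by
          have : IsUnit p' := by
            rw [hq'0] at hcop'
            exact isCoprime_zero_right.mp hcop'
          exact Int.isUnit_iff.mp this
        refine ⟨p', hunit, ?_⟩
        rw [hmob]
        have h1 : p' * p' = 1 := by rcases hunit with h | h <;> rw [h] <;> ring
        simp [vec, hq'0, h1]
      · have hmob : mob B (OnePoint.some x) =
            OnePoint.some (((B.1 0 0 : ℚ) * x + (B.1 0 1 : ℚ)) /
              ((B.1 1 0 : ℚ) * x + (B.1 1 1 : ℚ))) := by
          simp [mob, hczero]
        have hq'0 : q' ≠ 0 := by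
          intro h
          apply hczero
          rw [hden, h]; simp
        have hnum : (B.1 0 0 : ℚ) * x + (B.1 0 1 : ℚ) = (p' : ℚ) / (q : ℚ) := by
          rw [hxpq, hp']; push_cast; field_simp
        have hval : ((B.1 0 0 : ℚ) * x + (B.1 0 1 : ℚ)) /
            ((B.1 1 0 : ℚ) * x + (B.1 1 1 : ℚ)) = (p' : ℚ) / (q' : ℚ) := by
          rw [hnum, hden]
          have hq'Q : (q' : ℚ) ≠ 0 := by exact_mod_cast hq'0
          field_simp
        rw [hmob, hval]
        rcases lt_or_gt_of_ne hq'0 with hneg | hpos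
        · refine ⟨-1, Or.inr rfl, ?_⟩
          have heq : (p' : ℚ) / (q' : ℚ) = ((-p' : ℤ) : ℚ) / ((-q' : ℤ) : ℚ) := by
            push_cast; rw [div_neg, neg_div, neg_neg]
          obtain ⟨h1, h2⟩ := num_den_div (p := -p') (q := -q')
            (by omega) (hcop'.neg_left.neg_right)
          rw [heq]
          simp only [vec, Prod.ext_iff]
          constructor
          · rw [h1]; ring
          · rw [h2]; ring
        · refine ⟨1, Or.inl rfl, ?_⟩
          obtain ⟨h1, h2⟩ := num_den_div (p := p') (q := q') hpos hcop'
          simp only [vec, Prod.ext_iff]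
          constructor
          · rw [h1]; ring
          · rw [h2]; ring

lemma fareyAdj_iff (u w : OnePoint ℚ) :
    fareyAdj u w ↔ |(vec u).1 * (vec w).2 - (vec u).2 * (vec w).1| = 1 := by
  induction u using OnePoint.rec with
  | infty =>
      induction w using OnePoint.rec with
      | infty => simp [fareyAdj, vec]
      | coe y =>
          show y.den = 1 ↔ _
          simp only [vec]
          rw [one_mul, zero_mul, sub_zero, abs_eq (by norm_num : (0:ℤ) ≤ 1)]
          constructor
          · intro h; left; exact_mod_cast h
          · rintro (h | h)
            · exact_mod_cast h
            · exfalso; have := y.pos; omega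
  | coe x =>
      induction w using OnePoint.rec with
      | infty =>
          show x.den = 1 ↔ _
          simp only [vec]
          rw [mul_zero, mul_one, zero_sub, abs_neg, abs_eq (by norm_num : (0:ℤ) ≤ 1)]
          constructor
          · intro h; left; exact_mod_cast h
          · rintro (h | h)
            · exact_mod_cast h
            · exfalso; have := x.pos; omega
      | coe y => exact Iff.rfl

/-- The Cayley–Hamilton-style key identity. -/
lemma master (a b c d p q z1 z2 m n w1 w2 : ℤ) (hdet : a * d - b * c = 1)
    (hw1 : w1 = a * p + b * q) (hw2 : w2 = c * p + d * q)
    (hz1 : z1 = m * p + n * w1) (hz2 : z2 = m * q + n * w2) :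
    (a * z1 + b * z2) * z2 - (c * z1 + d * z2) * z1
      = (m ^ 2 + (a + d) * m * n + n ^ 2) * (w1 * q - w2 * p) := by
  subst hz1 hz2 hw1 hw2
  linear_combination (n ^ 2 * (a * p * q + b * q ^ 2 - c * p ^ 2 - d * p * q)) * hdet

lemma cramer (p q w1 w2 z1 z2 : ℤ) (hδ : (p * w2 - q * w1) ^ 2 = 1) :
    z1 = ((p * w2 - q * w1) * (z1 * w2 - z2 * w1)) * p
        + ((p * w2 - q * w1) * (p * z2 - q * z1)) * w1 ∧
    z2 = ((p * w2 - q * w1) * (z1 * w2 - z2 * w1)) * q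
        + ((p * w2 - q * w1) * (p * z2 - q * z1)) * w2 := by
  constructor
  · linear_combination (-z1) * hδ
  · linear_combination (-z2) * hδ

lemma enum (t m n : ℤ) (ht : t ^ 2 ≤ 1)
    (h : m ^ 2 + t * m * n + n ^ 2 = 1 ∨ m ^ 2 + t * m * n + n ^ 2 = -1) :
    (m = 1 ∧ n = 0) ∨ (m = -1 ∧ n = 0) ∨ (m = 0 ∧ n = 1) ∨ (m = 0 ∧ n = -1) ∨
      (m = 1 ∧ n = -t) ∨ (m = -1 ∧ n = t) := by
  have hs : m ^ 2 + t * m * n + n ^ 2 = 1 := by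
    rcases h with h | h
    · exact h
    · exfalso; nlinarith [sq_nonneg (2 * m + t * n), sq_nonneg n]
  have ht' : -1 ≤ t ∧ t ≤ 1 := by constructor <;> nlinarith
  have hn : -1 ≤ n ∧ n ≤ 1 := by
    constructor <;> nlinarith [sq_nonneg (2 * m + t * n)]
  have hm : -1 ≤ m ∧ m ≤ 1 := by
    constructor <;> nlinarith [sq_nonneg (2 * n + t * m)]
  obtain ⟨ht1, ht2⟩ := ht'
  obtain ⟨hn1, hn2⟩ := hn
  obtain ⟨hm1, hm2⟩ := hm
  interval_cases t <;> interval_cases m <;> interval_cases n <;> omega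

/-- Sequence controlling powers of a `2×2` matrix via Cayley–Hamilton. -/
def xseq (t : ℤ) : ℕ → ℤ
  | 0 => 0
  | 1 => 1
  | n + 2 => t * xseq t (n + 1) - xseq t n

lemma xseq_grow (t : ℤ) (ht : 2 ≤ |t|) : ∀ n, |xseq t n| < |xseq t (n + 1)| := by
  intro n
  induction n with
  | zero => simp [xseq]
  | succ n ih =>
      have h0 : xseq t (n + 2) = t * xseq t (n + 1) - xseq t n := rfl
      have h2 : |t * xseq t (n + 1)| - |xseq t n| ≤ |t * xseq t (n + 1) - xseq t n| :=
        abs_sub_abs_le_abs_sub _ _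
      have h3 : |t * xseq t (n + 1)| = |t| * |xseq t (n + 1)| := abs_mul _ _
      have h4 : 0 ≤ |xseq t (n + 1)| := abs_nonneg _
      rw [h0]
      nlinarith

lemma sl2_scalar (B : SL2Z) (hb : B.1 0 1 = 0) (hc : B.1 1 0 = 0) (had : B.1 0 0 = B.1 1 1) :
    B = 1 ∨ B = -1 := by
  have hdet := det_entries B
  rw [hb, hc, ← had] at hdet
  have ha : B.1 0 0 = 1 ∨ B.1 0 0 = -1 := by
    rcases Int.isUnit_iff.mp (IsUnit.of_mul_eq_one _ (by linarith : B.1 0 0 * B.1 0 0 = 1))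
      with h | h
    · exact Or.inl h
    · exact Or.inr h
  rcases ha with h | h
  · left
    ext i j
    fin_cases i <;> fin_cases j <;>
      simp [Matrix.SpecialLinearGroup.coe_one, Matrix.one_apply, h, hb, hc, had ▸ h]
  · right
    ext i j
    fin_cases i <;> fin_cases j <;>
      simp [Matrix.SpecialLinearGroup.coe_neg, Matrix.SpecialLinearGroup.coe_one,
        Matrix.one_apply, h, hb, hc, had ▸ h]

lemma pow_formula (A : SL2Z)
    (hA2 : A.1 * A.1 = (A.1 0 0 + A.1 1 1) • A.1 - 1) :
    ∀ n : ℕ, (A ^ (n + 1)).1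
      = xseq (A.1 0 0 + A.1 1 1) (n + 1) • A.1
        - xseq (A.1 0 0 + A.1 1 1) n • (1 : Matrix (Fin 2) (Fin 2) ℤ) := by
  set t := A.1 0 0 + A.1 1 1 with hT
  intro n
  induction n with
  | zero => simp [xseq]
  | succ n ih =>
      have hx : xseq t (n + 2) = t * xseq t (n + 1) - xseq t n := rfl
      rw [pow_succ, Matrix.SpecialLinearGroup.coe_mul, ih, hx]
      rw [sub_mul, smul_mul_assoc, smul_mul_assoc, one_mul, hA2]
      rw [smul_sub, smul_smul, sub_smul]
      rw [mul_comm (xseq t (n + 1)) t]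
      abel

lemma trace_sq_le (A : SL2Z) (hA1 : A ≠ 1) (hA2 : A ≠ -1)
    (hfin : ∃ k : ℕ, 1 ≤ k ∧ (A ^ k = 1 ∨ A ^ k = -1)) :
    (A.1 0 0 + A.1 1 1) ^ 2 ≤ 1 := by
  by_contra hgt
  push_neg at hgt
  have hdet := det_entries A
  have habs : 2 ≤ |A.1 0 0 + A.1 1 1| := by
    nlinarith [sq_abs (A.1 0 0 + A.1 1 1), abs_nonneg (A.1 0 0 + A.1 1 1)]
  have hA2m : A.1 * A.1 = (A.1 0 0 + A.1 1 1) • A.1 - 1 := by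
    ext i j
    fin_cases i <;> fin_cases j <;>
      simp only [Matrix.mul_apply, Fin.sum_univ_two, Matrix.sub_apply, Matrix.smul_apply,
        smul_eq_mul, Matrix.one_apply] <;>
      norm_num <;>
      first
        | ring1
        | linear_combination hdet
        | linear_combination -hdet
  obtain ⟨k, hk1, hk⟩ := hfin
  obtain ⟨m, rfl⟩ : ∃ m, k = m + 1 := ⟨k - 1, by omega⟩
  have hpf := pow_formula A hA2m m
  have hxne : xseq (A.1 0 0 + A.1 1 1) (m + 1) ≠ 0 := by
    have h1 := xseq_grow (A.1 0 0 + A.1 1 1) habs m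
    have h2 := abs_nonneg (xseq (A.1 0 0 + A.1 1 1) m)
    intro h
    rw [h, abs_zero] at h1
    omega
  have key : ∀ i j : Fin 2,
      xseq (A.1 0 0 + A.1 1 1) (m + 1) * A.1 i j
        - xseq (A.1 0 0 + A.1 1 1) m * (1 : Matrix (Fin 2) (Fin 2) ℤ) i j
      = (A ^ (m + 1)).1 i j := by
    intro i j
    rw [hpf]
    simp only [Matrix.sub_apply, Matrix.smul_apply, smul_eq_mul]
  have h01 : (1 : Matrix (Fin 2) (Fin 2) ℤ) 0 1 = 0 := by simp [Matrix.one_apply]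
  have h10 : (1 : Matrix (Fin 2) (Fin 2) ℤ) 1 0 = 0 := by simp [Matrix.one_apply]
  have h00 : (1 : Matrix (Fin 2) (Fin 2) ℤ) 0 0 = 1 := Matrix.one_apply_eq _
  have h11 : (1 : Matrix (Fin 2) (Fin 2) ℤ) 1 1 = 1 := Matrix.one_apply_eq _
  have hentries : A.1 0 1 = 0 ∧ A.1 1 0 = 0 ∧ A.1 0 0 = A.1 1 1 := by
    have e01 := key 0 1
    have e10 := key 1 0
    have e00 := key 0 0
    have e11 := key 1 1
    rw [h01] at e01
    rw [h10] at e10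
    rw [h00] at e00
    rw [h11] at e11
    have ee01 : xseq (A.1 0 0 + A.1 1 1) (m + 1) * A.1 0 1 = 0 := by
      rcases hk with hk | hk <;> rw [hk] at e01
      · rw [Matrix.SpecialLinearGroup.coe_one, h01] at e01
        linarith
      · rw [Matrix.SpecialLinearGroup.coe_neg, Matrix.SpecialLinearGroup.coe_one,
          Matrix.neg_apply, h01] at e01
        linarith
    have ee10 : xseq (A.1 0 0 + A.1 1 1) (m + 1) * A.1 1 0 = 0 := by
      rcases hk with hk | hk <;> rw [hk] at e10
      · rw [Matrix.SpecialLinearGroup.coe_one, h10] at e10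
        linarith
      · rw [Matrix.SpecialLinearGroup.coe_neg, Matrix.SpecialLinearGroup.coe_one,
          Matrix.neg_apply, h10] at e10
        linarith
    have eediag : xseq (A.1 0 0 + A.1 1 1) (m + 1) * (A.1 0 0 - A.1 1 1) = 0 := by
      rcases hk with hk | hk <;> rw [hk] at e00 e11
      · rw [Matrix.SpecialLinearGroup.coe_one, h00] at e00
        rw [Matrix.SpecialLinearGroup.coe_one, h11] at e11
        linear_combination e00 - e11
      · rw [Matrix.SpecialLinearGroup.coe_neg, Matrix.SpecialLinearGroup.coe_one,
          Matrix.neg_apply, h00] at e00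
        rw [Matrix.SpecialLinearGroup.coe_neg, Matrix.SpecialLinearGroup.coe_one,
          Matrix.neg_apply, h11] at e11
        linear_combination e00 - e11
    refine ⟨?_, ?_, ?_⟩
    · rcases mul_eq_zero.mp ee01 with h | h
      · exact absurd h hxne
      · exact h
    · rcases mul_eq_zero.mp ee10 with h | h
      · exact absurd h hxne
      · exact h
    · rcases mul_eq_zero.mp eediag with h | h
      · exact absurd h hxne
      · linarith
  rcases sl2_scalar A hentries.1 hentries.2.1 hentries.2.2 with h | h
  · exact hA1 h
  · exact hA2 h
/-- Componentwise version of `vec_mob`. -/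
lemma vec_mob' (B : SL2Z) (v : OnePoint ℚ) :
    ∃ e : ℤ, (e = 1 ∨ e = -1) ∧
      (vec (mob B v)).1 = e * (B.1 0 0 * (vec v).1 + B.1 0 1 * (vec v).2) ∧
      (vec (mob B v)).2 = e * (B.1 1 0 * (vec v).1 + B.1 1 1 * (vec v).2) := by
  obtain ⟨e, he, hev⟩ := vec_mob B v
  exact ⟨e, he, by rw [hev]; rfl, by rw [hev]; rfl⟩

lemma finish (B : SL2Z) (v₀ v : OnePoint ℚ) (y1 y2 e : ℤ) (he : e = 1 ∨ e = -1)
    (hact : act B (vec v₀) = (y1, y2)) (hv : vec v = (e * y1, e * y2)) :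
    mob B v₀ = v := by
  obtain ⟨e', he', hev'⟩ := vec_mob B v₀
  rw [hact] at hev'
  exact vec_sign (y := (y1, y2)) he' he hev' hv

end FGAux

theorem periodic_single_class (A : SL2Z) (hA1 : A ≠ 1) (hA2 : A ≠ -1)
    (hfin : ∃ k : ℕ, 1 ≤ k ∧ (A ^ k = 1 ∨ A ^ k = -1)) :
    ∃ v₀ : OnePoint ℚ, ∀ v : OnePoint ℚ,
      (mob A v = v ∨ fareyAdj (mob A v) v) →
      ∃ n : ℤ, mob (A ^ n) v₀ = v := by
  classical
  by_cases hS : ∃ v, mob A v = v ∨ fareyAdj (mob A v) v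
  case neg => exact ⟨OnePoint.infty, fun v hv => absurd ⟨v, hv⟩ hS⟩
  obtain ⟨v₀, hv₀⟩ := hS
  refine ⟨v₀, ?_⟩
  have hdet := FGAux.det_entries A
  have tsq : (A.1 0 0 + A.1 1 1) ^ 2 ≤ 1 := FGAux.trace_sq_le A hA1 hA2 hfin
  set a := A.1 0 0 with ha
  set b := A.1 0 1 with hb
  set c := A.1 1 0 with hc
  set d := A.1 1 1 with hd
  have hcne : c ≠ 0 := by
    intro h0
    rw [h0] at hdet
    have hu : IsUnit a := IsUnit.of_mul_eq_one d (by linarith)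
    rcases Int.isUnit_iff.mp hu with h | h <;> rw [h] at hdet <;> nlinarith
  have memD : ∀ v : OnePoint ℚ, (mob A v = v ∨ fareyAdj (mob A v) v) →
      |(a * (FGAux.vec v).1 + b * (FGAux.vec v).2) * (FGAux.vec v).2
        - (c * (FGAux.vec v).1 + d * (FGAux.vec v).2) * (FGAux.vec v).1| = 1 := by
    intro v hv
    obtain ⟨e, he, h1, h2⟩ := FGAux.vec_mob' A v
    rw [← ha, ← hb] at h1
    rw [← hc, ← hd] at h2
    rcases hv with hfix | hadj
    · exfalso
      rw [hfix] at h1 h2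
      have hD0 : (a * (FGAux.vec v).1 + b * (FGAux.vec v).2) * (FGAux.vec v).2
          - (c * (FGAux.vec v).1 + d * (FGAux.vec v).2) * (FGAux.vec v).1 = 0 := by
        linear_combination (-(c * (FGAux.vec v).1 + d * (FGAux.vec v).2)) * h1
          + (a * (FGAux.vec v).1 + b * (FGAux.vec v).2) * h2
      have hE : (2 * c * (FGAux.vec v).1 + (d - a) * (FGAux.vec v).2) ^ 2
          + (4 - (a + d) ^ 2) * (FGAux.vec v).2 ^ 2 = 0 := by
        linear_combination (-4 * c) * hD0 + (-4 * (FGAux.vec v).2 ^ 2) * hdet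
      have hz2sq : (FGAux.vec v).2 ^ 2 ≤ 0 := by
        nlinarith [sq_nonneg (2 * c * (FGAux.vec v).1 + (d - a) * (FGAux.vec v).2)]
      have hz2 : (FGAux.vec v).2 = 0 :=
        (pow_eq_zero_iff two_ne_zero).mp (le_antisymm hz2sq (sq_nonneg _))
      have hz1 : (FGAux.vec v).1 = 1 := FGAux.vec_den_zero hz2
      rw [hz1, hz2] at hE
      have hcsq : c ^ 2 ≤ 0 := by nlinarith
      have : c = 0 := (pow_eq_zero_iff two_ne_zero).mp (le_antisymm hcsq (sq_nonneg _))
      exact hcne this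
    · have h := (FGAux.fareyAdj_iff (mob A v) v).mp hadj
      rw [h1, h2] at h
      have he1 : |e| = 1 := by rcases he with rfl | rfl <;> simp
      have hrw : e * (a * (FGAux.vec v).1 + b * (FGAux.vec v).2) * (FGAux.vec v).2
          - e * (c * (FGAux.vec v).1 + d * (FGAux.vec v).2) * (FGAux.vec v).1
          = e * ((a * (FGAux.vec v).1 + b * (FGAux.vec v).2) * (FGAux.vec v).2
            - (c * (FGAux.vec v).1 + d * (FGAux.vec v).2) * (FGAux.vec v).1) := by ring
      rw [hrw, abs_mul, he1, one_mul] at h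
      exact h
  intro v hv
  have hDu := memD v₀ hv₀
  have hDz := memD v hv
  set p := (FGAux.vec v₀).1 with hp
  set q := (FGAux.vec v₀).2 with hq
  set z1 := (FGAux.vec v).1 with hz1s
  set z2 := (FGAux.vec v).2 with hz2s
  set w1 := a * p + b * q with hw1
  set w2 := c * p + d * q with hw2
  have hδ : (p * w2 - q * w1) ^ 2 = 1 := by
    have h1 := sq_abs (w1 * q - w2 * p)
    rw [hDu] at h1
    linear_combination -h1
  obtain ⟨m, hm⟩ : ∃ m : ℤ, m = (p * w2 - q * w1) * (z1 * w2 - z2 * w1) := ⟨_, rfl⟩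
  obtain ⟨n, hn⟩ : ∃ n : ℤ, n = (p * w2 - q * w1) * (p * z2 - q * z1) := ⟨_, rfl⟩
  obtain ⟨hcz1, hcz2⟩ := FGAux.cramer p q w1 w2 z1 z2 hδ
  rw [← hm, ← hn] at hcz1 hcz2
  have hkey := FGAux.master a b c d p q z1 z2 m n w1 w2 hdet hw1 hw2 hcz1 hcz2
  rw [hkey, abs_mul, hDu, mul_one] at hDz
  have hs := (abs_eq (by norm_num : (0:ℤ) ≤ 1)).mp hDz
  have hpair : FGAux.vec v = (z1, z2) := by rw [hz1s, hz2s]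
  have hactA : FGAux.act A (FGAux.vec v₀) = (w1, w2) := by
    rw [hw1, hw2, ha, hb, hc, hd, hp, hq]; rfl
  have hact1 : FGAux.act 1 (FGAux.vec v₀) = (p, q) := by
    rw [hp, hq]
    simp [FGAux.act, Matrix.SpecialLinearGroup.coe_one, Matrix.one_apply]
  have hactAA : FGAux.act (A * A) (FGAux.vec v₀) = ((a + d) * w1 - p, (a + d) * w2 - q) := by
    simp only [FGAux.act, Matrix.SpecialLinearGroup.coe_mul, Matrix.mul_apply,
      Fin.sum_univ_two]
    rw [← ha, ← hb, ← hc, ← hd, ← hp, ← hq, hw1, hw2]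
    rw [Prod.mk.injEq]
    constructor
    · linear_combination (-p) * hdet
    · linear_combination (-q) * hdet
  rcases FGAux.enum (a + d) m n tsq hs with
    ⟨hM, hN⟩ | ⟨hM, hN⟩ | ⟨hM, hN⟩ | ⟨hM, hN⟩ | ⟨hM, hN⟩ | ⟨hM, hN⟩
  · refine ⟨0, ?_⟩
    rw [zpow_zero]
    refine FGAux.finish 1 v₀ v p q 1 (Or.inl rfl) hact1 ?_
    rw [hpair, Prod.mk.injEq]
    constructor
    · linear_combination hcz1 + p * hM + w1 * hN
    · linear_combination hcz2 + q * hM + w2 * hN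
  · refine ⟨0, ?_⟩
    rw [zpow_zero]
    refine FGAux.finish 1 v₀ v p q (-1) (Or.inr rfl) hact1 ?_
    rw [hpair, Prod.mk.injEq]
    constructor
    · linear_combination hcz1 + p * hM + w1 * hN
    · linear_combination hcz2 + q * hM + w2 * hN
  · refine ⟨1, ?_⟩
    rw [zpow_one]
    refine FGAux.finish A v₀ v w1 w2 1 (Or.inl rfl) hactA ?_
    rw [hpair, Prod.mk.injEq]
    constructor
    · linear_combination hcz1 + p * hM + w1 * hN
    · linear_combination hcz2 + q * hM + w2 * hN
  · refine ⟨1, ?_⟩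
    rw [zpow_one]
    refine FGAux.finish A v₀ v w1 w2 (-1) (Or.inr rfl) hactA ?_
    rw [hpair, Prod.mk.injEq]
    constructor
    · linear_combination hcz1 + p * hM + w1 * hN
    · linear_combination hcz2 + q * hM + w2 * hN
  · refine ⟨2, ?_⟩
    rw [zpow_two]
    refine FGAux.finish (A * A) v₀ v ((a + d) * w1 - p) ((a + d) * w2 - q) (-1)
      (Or.inr rfl) hactAA ?_
    rw [hpair, Prod.mk.injEq]
    constructor
    · linear_combination hcz1 + p * hM + w1 * hN
    · linear_combination hcz2 + q * hM + w2 * hN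
  · refine ⟨2, ?_⟩
    rw [zpow_two]
    refine FGAux.finish (A * A) v₀ v ((a + d) * w1 - p) ((a + d) * w2 - q) 1
      (Or.inl rfl) hactAA ?_
    rw [hpair, Prod.mk.injEq]
    constructor
    · linear_combination hcz1 + p * hM + w1 * hN
    · linear_combination hcz2 + q * hM + w2 * hN
end

section
/- Let ε ∈ {1, −1}, let n be a nonzero integer, and let A = [[ε, n],[0, ε]] ∈ SL(2,ℤ). Then a point v ∈ ℚ ∪ {∞} satisfies (A·v = v or A·v is Farey-adjacent to v) if and only if v = ∞, or |n| = 1 and v is an integer. Moreover, when |n| = 1 the integers form a single A-equivalence class (the orbit of 0), so the set of such v is contained in the union of at most two A-equivalence classes, namely that of ∞ and (when |n| = 1) that of 0. -/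
open OnePoint Matrix

private theorem farey_key (x y : ℚ) (c : ℤ) (h : y = x + c) :
    ((y.num * x.den - y.den * x.num : ℤ) : ℚ) = c * y.den * x.den := by
  have hx : (x.den : ℚ) ≠ 0 := by exact_mod_cast x.den_ne_zero
  have hy : (y.den : ℚ) ≠ 0 := by exact_mod_cast y.den_ne_zero
  have hxn := Rat.num_div_den x
  have hyn := Rat.num_div_den y
  rw [div_eq_iff hx] at hxn
  rw [div_eq_iff hy] at hyn
  push_cast
  linear_combination (x.den : ℚ) * hyn - (y.den : ℚ) * hxn + (x.den : ℚ) * (y.den : ℚ) * h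

private theorem mob_some (A : SL2Z) (x : ℚ)
    (h : (A.1 1 0 : ℚ) * x + (A.1 1 1 : ℚ) ≠ 0) :
    mob A (OnePoint.some x) = OnePoint.some (((A.1 0 0 : ℚ) * x + (A.1 0 1 : ℚ)) /
      ((A.1 1 0 : ℚ) * x + (A.1 1 1 : ℚ))) := by
  simp [mob, h]

theorem reducible_case_computation (ε n : ℤ) (hε : ε = 1 ∨ ε = -1) (hn : n ≠ 0)
    (A : SL2Z) (hA : (A : Matrix (Fin 2) (Fin 2) ℤ) = !![ε, n; 0, ε]) :
    (∀ v : OnePoint ℚ,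
      (mob A v = v ∨ fareyAdj (mob A v) v) ↔
        (v = ∞ ∨ (|n| = 1 ∧ ∃ m : ℤ, v = ((m : ℚ) : OnePoint ℚ)))) ∧
    (|n| = 1 → ∀ m : ℤ, ∃ k : ℤ,
      mob (A ^ k) (((0 : ℚ) : OnePoint ℚ)) = ((m : ℚ) : OnePoint ℚ)) := by
  have a00 : A.1 0 0 = ε := by rw [hA]; simp
  have a01 : A.1 0 1 = n := by rw [hA]; simp
  have a10 : A.1 1 0 = 0 := by rw [hA]; simp
  have a11 : A.1 1 1 = ε := by rw [hA]; simp
  have hε2 : ε * ε = 1 := by rcases hε with h | h <;> simp [h]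
  have hεQ : (ε : ℚ) ≠ 0 := by rcases hε with h | h <;> simp [h]
  have hεQ2 : (ε : ℚ) * (ε : ℚ) = 1 := by exact_mod_cast hε2
  have hεabs : ε.natAbs = 1 := by rcases hε with h | h <;> simp [h]
  constructor
  · intro v
    match v with
    | OnePoint.infty =>
      constructor
      · intro _; left; rfl
      · intro _; left
        simp [mob, a10]
    | OnePoint.some x =>
      obtain ⟨c, hc⟩ : ∃ c : ℤ, c = n * ε := ⟨_, rfl⟩
      have hcQ : ((c : ℤ) : ℚ) = (n : ℚ) * (ε : ℚ) := by rw [hc]; push_cast; ring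
      have hden : (A.1 1 0 : ℚ) * x + (A.1 1 1 : ℚ) ≠ 0 := by
        rw [a10, a11]; push_cast; simpa using hεQ
      have hmob : mob A (OnePoint.some x) = OnePoint.some (x + (c : ℚ)) := by
        rw [mob_some A x hden, a00, a01, a10, a11]
        congr 1
        rw [div_eq_iff (by simpa using hεQ)]
        rw [hcQ]
        push_cast
        linear_combination (-(n : ℚ)) * hεQ2
      set y : ℚ := x + (c : ℚ) with hy
      have hkey : y.num * (x.den : ℤ) - (y.den : ℤ) * x.num = c * y.den * x.den := by
        exact_mod_cast farey_key x y c hy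
      have hcabs : c.natAbs = n.natAbs := by
        rw [hc, Int.natAbs_mul, hεabs, mul_one]
      have hc0 : c ≠ 0 := by
        rw [hc]
        exact mul_ne_zero hn (by rcases hε with h | h <;> simp [h])
      have hadj : fareyAdj (OnePoint.some y) (OnePoint.some x) ↔
          (n.natAbs = 1 ∧ x.den = 1) := by
        show |y.num * (x.den : ℤ) - (y.den : ℤ) * x.num| = 1 ↔ _
        rw [hkey, Int.abs_eq_natAbs]
        norm_cast
        rw [Int.natAbs_mul, Int.natAbs_mul, hcabs, Int.natAbs_natCast, Int.natAbs_natCast,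
          mul_eq_one, mul_eq_one]
        constructor
        · rintro ⟨⟨h1, _⟩, h3⟩; exact ⟨h1, h3⟩
        · rintro ⟨h1, h3⟩
          refine ⟨⟨h1, ?_⟩, h3⟩
          have hxint : (x.num : ℚ) = x := (Rat.den_eq_one_iff x).mp h3
          have hy' : y = ((x.num + c : ℤ) : ℚ) := by
            rw [hy]; push_cast; rw [hxint]
          rw [hy', Rat.den_intCast]
      constructor
      · rintro (h | h)
        · rw [hmob] at h
          exfalso
          have h' : y = x := by
            have := h
            rw [show (OnePoint.some y : OnePoint ℚ) = (y : OnePoint ℚ) from rfl,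
              show (OnePoint.some x : OnePoint ℚ) = (x : OnePoint ℚ) from rfl] at this
            exact OnePoint.coe_eq_coe.mp this
          have hcz : (c : ℚ) = 0 := by
            rw [hy] at h'
            linarith [h']
          exact hc0 (by exact_mod_cast hcz)
        · rw [hmob] at h
          obtain ⟨h1, h3⟩ := hadj.mp h
          right
          refine ⟨by rw [Int.abs_eq_natAbs, h1, Nat.cast_one], x.num, ?_⟩
          have hxint : (x.num : ℚ) = x := (Rat.den_eq_one_iff x).mp h3
          show (OnePoint.some x : OnePoint ℚ) = OnePoint.some ((x.num : ℚ))
          exact congrArg OnePoint.some hxint.symm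
      · rintro (h | ⟨h1, m, hm⟩)
        · exact absurd h (OnePoint.coe_ne_infty x)
        · right
          rw [hmob]
          apply hadj.mpr
          have hmx : x = (m : ℚ) := OnePoint.coe_eq_coe.mp hm
          refine ⟨?_, by rw [hmx, Rat.den_intCast]⟩
          rw [Int.abs_eq_natAbs] at h1
          exact_mod_cast h1
  · -- second part
    intro h1 m
    have key : ∀ k : ℤ, (A ^ k).1 1 0 = 0 ∧ (A ^ k).1 1 1 * (A ^ k).1 0 0 = 1 ∧
        (A ^ k).1 0 1 * (A ^ k).1 1 1 = k * (n * ε) := by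
      intro k
      induction k using Int.induction_on with
      | zero => simp
      | succ i ih =>
        obtain ⟨p10, pd, pb⟩ := ih
        have hpow : (A : SL2Z) ^ ((i : ℤ) + 1) = A ^ (i : ℤ) * A := by
          rw [_root_.zpow_add_one]
        rw [hpow]
        have hcoe : ((A ^ (i : ℤ) * A : SL2Z) : Matrix (Fin 2) (Fin 2) ℤ) =
            ((A ^ (i : ℤ) : SL2Z) : Matrix (Fin 2) (Fin 2) ℤ) * A.1 := rfl
        rw [hcoe]
        simp only [Matrix.mul_apply, Fin.sum_univ_two, a00, a01, a10, a11]
        rw [p10]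
        refine ⟨by ring, ?_, ?_⟩
        · linear_combination ε * ε * pd + hε2
        · linear_combination (n * ε) * pd + (ε * ε) * pb + ((i : ℤ) * n * ε) * hε2
      | pred i ih =>
        obtain ⟨p10, pd, pb⟩ := ih
        have hpow : (A : SL2Z) ^ (-(i : ℤ) - 1) = A ^ (-(i : ℤ)) * A⁻¹ := by
          rw [_root_.zpow_sub_one]
        rw [hpow]
        have hinv := Matrix.SpecialLinearGroup.SL2_inv_expl A
        have hcoe : ((A ^ (-(i : ℤ)) * A⁻¹ : SL2Z) : Matrix (Fin 2) (Fin 2) ℤ) =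
            ((A ^ (-(i : ℤ)) : SL2Z) : Matrix (Fin 2) (Fin 2) ℤ) * (A⁻¹).1 := rfl
        have i00 : (A⁻¹).1 0 0 = ε := by rw [hinv]; simp [a11]
        have i01 : (A⁻¹).1 0 1 = -n := by rw [hinv]; simp [a01]
        have i10 : (A⁻¹).1 1 0 = 0 := by rw [hinv]; simp [a10]
        have i11 : (A⁻¹).1 1 1 = ε := by rw [hinv]; simp [a00]
        rw [hcoe]
        simp only [Matrix.mul_apply, Fin.sum_univ_two, i00, i01, i10, i11]
        rw [p10]
        refine ⟨by ring, ?_, ?_⟩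
        · linear_combination ε * ε * pd + hε2
        · linear_combination (-(n * ε)) * pd + (ε * ε) * pb + (-(i : ℤ) * n * ε) * hε2
    refine ⟨m * n * ε, ?_⟩
    obtain ⟨p10, pd, pb⟩ := key (m * n * ε)
    have hn2 : n * n = 1 := by
      rcases (abs_eq (by norm_num : (0:ℤ) ≤ 1)).mp h1 with h | h <;> simp [h]
    have hbd : (A ^ (m * n * ε)).1 0 1 * (A ^ (m * n * ε)).1 1 1 = m := by
      rw [pb]; linear_combination (m * ε * ε) * hn2 + m * hε2
    have hd0 : (A ^ (m * n * ε)).1 1 1 ≠ 0 := by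
      intro h; rw [h] at pd; simp at pd
    have hd0Q : ((A ^ (m * n * ε)).1 1 1 : ℚ) ≠ 0 := by exact_mod_cast hd0
    have hdd : (A ^ (m * n * ε)).1 1 1 * (A ^ (m * n * ε)).1 1 1 = 1 := by
      rcases Int.eq_one_or_neg_one_of_mul_eq_one pd with h | h <;> rw [h] <;> ring
    have hb : (A ^ (m * n * ε)).1 0 1 = m * (A ^ (m * n * ε)).1 1 1 := by
      have : (A ^ (m * n * ε)).1 0 1 * (A ^ (m * n * ε)).1 1 1 * (A ^ (m * n * ε)).1 1 1 =
          m * (A ^ (m * n * ε)).1 1 1 := congrArg (· * (A ^ (m * n * ε)).1 1 1) hbd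
      rw [mul_assoc, hdd, mul_one] at this
      linarith [this]
    have h0 : ((A ^ (m * n * ε)).1 1 0 : ℚ) * (0 : ℚ) + ((A ^ (m * n * ε)).1 1 1 : ℚ) ≠ 0 := by
      simpa using hd0Q
    show mob (A ^ (m * n * ε)) (OnePoint.some (0 : ℚ)) = OnePoint.some ((m : ℚ))
    rw [mob_some _ _ h0]
    congr 1
    rw [hb]
    push_cast
    field_simp
    rw [div_eq_iff (by simpa using hd0Q)]
    ring
end

section
/- Let A = [[a,b],[c,d]] ∈ SL(2,ℤ) be hyperbolic (|a+d| > 2), with real fixed points α₋ < α₊. If v ∈ ℚ ∪ {∞} is such that v and A·v are Farey-adjacent, then v is visible from the axis: there exists w ∈ ℚ ∪ {∞}, on the opposite side of the axis from v, such that v and w are Farey-adjacent. -/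
open OnePoint Matrix

/-- A point of `ℚ ∪ {∞}` lies (strictly) inside the axis with endpoints
`αm < αp` if, as a real number, it lies strictly between them; `∞` counts
as outside. -/
def insideAxis (αm αp : ℝ) : OnePoint ℚ → Prop
  | OnePoint.infty => False
  | OnePoint.some x => αm < (x : ℝ) ∧ (x : ℝ) < αp

private lemma exists_t (ε β γ D : ℤ) (hε : ε^2 = 1) (hD : β^2 - 4*ε*γ = D) (h5 : 5 ≤ D) :
    ∃ t : ℤ, ε * (ε*t^2 + β*t + γ) < 0 := by
  refine ⟨(-(ε*β))/2, ?_⟩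
  set t := (-(ε*β))/2 with hT
  have h1 : 2*t + ε*β = 0 ∨ 2*t + ε*β = -1 := by omega
  have key : 4*(ε*(ε*t^2 + β*t + γ)) = (2*t + ε*β)^2 - D := by
    linear_combination (4*t^2 - β^2)*hε - hD
  have hb : (2*t + ε*β)^2 ≤ 1 := by rcases h1 with h | h <;> rw [h] <;> norm_num
  linarith

private lemma core (a b c d : ℤ) (hdet : a*d - b*c = 1) (h5 : 5 ≤ (a+d)^2 - 4)
    (p q r0 s0 : ℤ) (hbez : p*s0 - q*r0 = 1)
    (hQ : c*p^2 + (d-a)*p*q - b*q^2 = 1 ∨ c*p^2 + (d-a)*p*q - b*q^2 = -1) :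
    ∃ r s : ℤ, (p*s - q*r = 1 ∨ p*s - q*r = -1) ∧ 0 ≤ s ∧
      (c*p^2 + (d-a)*p*q - b*q^2) * (c*r^2 + (d-a)*r*s - b*s^2) < 0 := by
  have hε2 : (c*p^2 + (d-a)*p*q - b*q^2)^2 = 1 := by
    rcases hQ with h | h <;> rw [h] <;> norm_num
  have hdisc : (2*c*p*r0 + (d-a)*(p*s0 + q*r0) - 2*b*q*s0)^2
      - 4*(c*p^2 + (d-a)*p*q - b*q^2)*(c*r0^2 + (d-a)*r0*s0 - b*s0^2) = (a+d)^2 - 4 := by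
    have h1 : (2*c*p*r0 + (d-a)*(p*s0 + q*r0) - 2*b*q*s0)^2
        - 4*(c*p^2 + (d-a)*p*q - b*q^2)*(c*r0^2 + (d-a)*r0*s0 - b*s0^2)
        = ((d-a)^2 + 4*c*b)*(p*s0 - q*r0)^2 := by ring
    rw [h1, hbez]
    linear_combination (-4)*hdet
  obtain ⟨t, ht⟩ := exists_t _ _ _ _ hε2 hdisc h5
  have hval : c*(r0+t*p)^2 + (d-a)*(r0+t*p)*(s0+t*q) - b*(s0+t*q)^2
      = (c*p^2 + (d-a)*p*q - b*q^2)*t^2 + (2*c*p*r0 + (d-a)*(p*s0 + q*r0) - 2*b*q*s0)*t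
        + (c*r0^2 + (d-a)*r0*s0 - b*s0^2) := by ring
  have hadj : p*(s0+t*q) - q*(r0+t*p) = 1 := by linear_combination hbez
  rcases le_or_gt 0 (s0+t*q) with hs | hs
  · exact ⟨r0+t*p, s0+t*q, Or.inl hadj, hs, by rw [hval]; exact ht⟩
  · refine ⟨-(r0+t*p), -(s0+t*q), Or.inr (by linarith), by linarith, ?_⟩
    have h2 : c*(-(r0+t*p))^2 + (d-a)*(-(r0+t*p))*(-(s0+t*q)) - b*(-(s0+t*q))^2
        = c*(r0+t*p)^2 + (d-a)*(r0+t*p)*(s0+t*q) - b*(s0+t*q)^2 := by ring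
    rw [h2, hval]; exact ht

private lemma inside_iff (b c e : ℤ) (αm αp : ℝ) (hlt : αm < αp) (hc : c ≠ 0)
    (hm : (c:ℝ)*αm^2 + (e:ℝ)*αm - (b:ℝ) = 0) (hp : (c:ℝ)*αp^2 + (e:ℝ)*αp - (b:ℝ) = 0)
    (n m : ℤ) (hm0 : 0 < m) (z : ℚ) (hz : (z:ℝ) = (n:ℝ)/(m:ℝ)) :
    insideAxis αm αp (OnePoint.some z) ↔ ((c:ℝ) * ((c*n^2 + e*n*m - b*m^2 : ℤ) : ℝ) < 0) := by
  have hmne : (m:ℝ) ≠ 0 := Int.cast_ne_zero.mpr hm0.ne'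
  have hcne : (c:ℝ) ≠ 0 := Int.cast_ne_zero.mpr hc
  have hn : (n:ℝ) = (z:ℝ) * m := by rw [hz]; field_simp
  have hsum : (c:ℝ)*(αm+αp) + e = 0 := by
    have h0 : (αm - αp) * ((c:ℝ)*(αm+αp) + e) = 0 := by linear_combination hm - hp
    rcases mul_eq_zero.mp h0 with h | h
    · exact absurd (sub_eq_zero.mp h) (ne_of_lt hlt)
    · exact h
  have hprod : (c:ℝ)*(αm*αp) + b = 0 := by linear_combination αm*hsum - hm
  have key : (c:ℝ) * ((c*n^2 + e*n*m - b*m^2 : ℤ) : ℝ)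
      = ((c:ℝ)*m)^2 * (((z:ℝ) - αm) * ((z:ℝ) - αp)) := by
    push_cast
    rw [hn]
    linear_combination ((z:ℝ)*(c:ℝ)*(m:ℝ)^2)*hsum - (c:ℝ)*(m:ℝ)^2*hprod
  have hcm : (0:ℝ) < ((c:ℝ)*m)^2 :=
    lt_of_le_of_ne (sq_nonneg _) (Ne.symm (pow_ne_zero 2 (mul_ne_zero hcne hmne)))
  constructor
  · rintro ⟨h1, h2⟩
    rw [key]
    have : ((z:ℝ) - αm) * ((z:ℝ) - αp) < 0 :=
      mul_neg_of_pos_of_neg (by linarith) (by linarith)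
    nlinarith
  · intro h
    rw [key] at h
    have hzz : ((z:ℝ) - αm) * ((z:ℝ) - αp) < 0 := by nlinarith
    constructor <;> nlinarith

private lemma cross_abs (N M pz qz : ℤ) (hM : M ≠ 0) (hcop : IsCoprime N M)
    (h : |pz * ((((N:ℚ)/(M:ℚ))).den:ℤ) - qz * ((N:ℚ)/(M:ℚ)).num| = 1) :
    |pz*M - qz*N| = 1 := by
  rcases hM.lt_or_gt with h1 | h1
  · have hg : Nat.Coprime (-N).natAbs (-M).natAbs :=
      Int.isCoprime_iff_gcd_eq_one.mp (hcop.neg_left.neg_right)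
    have e : (N:ℚ)/(M:ℚ) = ((-N:ℤ):ℚ)/((-M:ℤ):ℚ) := by push_cast; rw [neg_div_neg_eq]
    rw [e, Rat.num_div_eq_of_coprime (by linarith) hg,
      Rat.den_div_eq_of_coprime (by linarith) hg] at h
    rwa [show pz*M - qz*N = -(pz * -M - qz * -N) from by ring, abs_neg]
  · have hg : Nat.Coprime N.natAbs M.natAbs := Int.isCoprime_iff_gcd_eq_one.mp hcop
    rwa [Rat.num_div_eq_of_coprime h1 hg, Rat.den_div_eq_of_coprime h1 hg] at h

private lemma finish_some (a b c d : ℤ) (hdet : a*d - b*c = 1) (h5 : 5 ≤ (a+d)^2 - 4)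
    (αm αp : ℝ) (hlt : αm < αp) (hc0 : c ≠ 0)
    (hm : (c:ℝ)*αm^2 + ((d-a:ℤ):ℝ)*αm - (b:ℝ) = 0)
    (hp : (c:ℝ)*αp^2 + ((d-a:ℤ):ℝ)*αp - (b:ℝ) = 0)
    (x : ℚ) (p q : ℤ) (hpdef : x.num = p) (hqdef : (x.den:ℤ) = q) (hq0 : 0 < q)
    (r0 s0 : ℤ) (hbez : p*s0 - q*r0 = 1)
    (hQ : c*p^2 + (d-a)*p*q - b*q^2 = 1 ∨ c*p^2 + (d-a)*p*q - b*q^2 = -1) :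
    ∃ w, fareyAdj (OnePoint.some x) w ∧
      ¬ (insideAxis αm αp (OnePoint.some x) ↔ insideAxis αm αp w) := by
  obtain ⟨r, s, hadj, hs, hsign⟩ := core a b c d hdet h5 p q r0 s0 hbez hQ
  have hxR : (x:ℝ) = (p:ℝ)/(q:ℝ) := by
    rw [← hpdef, ← hqdef]; push_cast; exact Rat.cast_def x
  have hvIns := inside_iff b c (d-a) αm αp hlt hc0 hm hp p q hq0 x hxR
  have hcR : ((c:ℝ)) ≠ 0 := Int.cast_ne_zero.mpr hc0
  have hc2 : (0:ℝ) < (c:ℝ)^2 := lt_of_le_of_ne (sq_nonneg _) (Ne.symm (pow_ne_zero 2 hcR))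
  rcases lt_or_eq_of_le hs with hspos | hs0
  · -- s > 0
    have hcoprs : IsCoprime r s := by
      rcases hadj with h | h
      · exact ⟨-q, p, by linear_combination h⟩
      · exact ⟨q, -p, by linear_combination (-1 : ℤ)*h⟩
    have hg : Nat.Coprime r.natAbs s.natAbs := Int.isCoprime_iff_gcd_eq_one.mp hcoprs
    have hnum := Rat.num_div_eq_of_coprime hspos hg
    have hden := Rat.den_div_eq_of_coprime hspos hg
    refine ⟨OnePoint.some ((r:ℚ)/(s:ℚ)), ?_, ?_⟩
    · show |x.num * ((((r:ℚ)/(s:ℚ))).den:ℤ) - (x.den:ℤ) * (((r:ℚ)/(s:ℚ))).num| = 1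
      rw [hnum, hden, hpdef, hqdef]
      rcases hadj with h | h <;> rw [h] <;> norm_num
    · have hwIns := inside_iff b c (d-a) αm αp hlt hc0 hm hp r s hspos ((r:ℚ)/(s:ℚ))
        (by push_cast; ring)
      intro hiff
      rw [hvIns, hwIns] at hiff
      have hsR : ((c*p^2+(d-a)*p*q-b*q^2 : ℤ):ℝ) * ((c*r^2+(d-a)*r*s-b*s^2 : ℤ):ℝ) < 0 := by
        exact_mod_cast hsign
      rcases lt_trichotomy ((c:ℝ) * ((c*p^2+(d-a)*p*q-b*q^2 : ℤ):ℝ)) 0 with h1|h1|h1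
      · have h2 := hiff.mp h1
        nlinarith [mul_pos_of_neg_of_neg h1 h2, hsR, sq_nonneg ((c:ℝ))]
      · rcases mul_eq_zero.mp h1 with h2|h2
        · exact hcR h2
        · rw [h2, zero_mul] at hsR; exact lt_irrefl 0 hsR
      · have h2 : ¬ ((c:ℝ) * ((c*r^2+(d-a)*r*s-b*s^2 : ℤ):ℝ) < 0) :=
          fun hh => absurd (hiff.mpr hh) (not_lt.mpr h1.le)
        push_neg at h2
        nlinarith [mul_nonneg h1.le h2, hsR, hc2]
  · -- s = 0
    rw [← hs0] at hadj hsign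
    have hqr : q * r = 1 ∨ q * r = -1 := by
      rcases hadj with h | h
      · exact Or.inr (by linear_combination (-1:ℤ)*h)
      · exact Or.inl (by linear_combination (-1:ℤ)*h)
    have hq1 : q = 1 := by
      have hu : IsUnit q := by
        rcases hqr with h | h
        · exact IsUnit.of_mul_eq_one (a := q) r h
        · exact IsUnit.of_mul_eq_one (a := q) (-r) (by linear_combination (-1:ℤ)*h)
      rcases Int.isUnit_iff.mp hu with h | h
      · exact h
      · omega
    have hr : r = 1 ∨ r = -1 := by rw [hq1] at hqr; omega
    have h2 : c * (c*p^2+(d-a)*p*q-b*q^2) < 0 := by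
      rcases hr with h | h <;> rw [h] at hsign <;> nlinarith [hsign]
    have h4 : ((c:ℤ):ℝ) * ((c*p^2+(d-a)*p*q-b*q^2 : ℤ):ℝ) < 0 := by exact_mod_cast h2
    refine ⟨OnePoint.infty, ?_, ?_⟩
    · show x.den = 1
      have : (x.den:ℤ) = 1 := hqdef.trans hq1
      exact_mod_cast this
    · intro hiff
      exact hiff.mp (hvIns.mpr h4)

theorem visible_from_axis (A : SL2Z) (hyp : |A.1 0 0 + A.1 1 1| > 2)
    (αm αp : ℝ) (hlt : αm < αp)
    (hm : (A.1 1 0 : ℝ) * αm ^ 2 + ((A.1 1 1 : ℝ) - (A.1 0 0 : ℝ)) * αm - (A.1 0 1 : ℝ) = 0)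
    (hp : (A.1 1 0 : ℝ) * αp ^ 2 + ((A.1 1 1 : ℝ) - (A.1 0 0 : ℝ)) * αp - (A.1 0 1 : ℝ) = 0)
    (v : OnePoint ℚ) (hv : fareyAdj v (mob A v)) :
    ∃ w : OnePoint ℚ, fareyAdj v w ∧
      ¬ (insideAxis αm αp v ↔ insideAxis αm αp w) := by
  obtain ⟨a, ha⟩ : ∃ t, A.1 0 0 = t := ⟨_, rfl⟩
  obtain ⟨b, hb⟩ : ∃ t, A.1 0 1 = t := ⟨_, rfl⟩
  obtain ⟨c, hc⟩ : ∃ t, A.1 1 0 = t := ⟨_, rfl⟩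
  obtain ⟨d, hd⟩ : ∃ t, A.1 1 1 = t := ⟨_, rfl⟩
  rw [ha, hd] at hyp
  rw [ha, hb, hc, hd] at hm hp
  have hdet : a*d - b*c = 1 := by
    have h := A.2
    rw [Matrix.det_fin_two] at h
    rw [ha, hb, hc, hd] at h
    exact h
  have hc0 : c ≠ 0 := by
    intro h0
    rw [h0] at hm hp hdet
    push_cast at hm hp
    have h1 : (αm - αp) * ((d:ℝ) - (a:ℝ)) = 0 := by linear_combination hm - hp
    rcases mul_eq_zero.mp h1 with h2 | h2
    · exact absurd (sub_eq_zero.mp h2) (ne_of_lt hlt)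
    · have hda : d = a := by exact_mod_cast sub_eq_zero.mp h2
      rw [hda] at hdet hyp
      have h3 : a * a = 1 := by linear_combination hdet
      rcases mul_self_eq_one_iff.mp h3 with h4 | h4 <;> rw [h4] at hyp <;> norm_num at hyp
  have h5 : 5 ≤ (a+d)^2 - 4 := by
    have h3 : a + d ≥ 3 ∨ a + d ≤ -3 := by
      rcases abs_cases (a+d) with ⟨h1, h2⟩ | ⟨h1, h2⟩ <;> rw [h1] at hyp <;> omega
    rcases h3 with h | h <;> nlinarith
  have hm' : (c:ℝ)*αm^2 + ((d-a:ℤ):ℝ)*αm - (b:ℝ) = 0 := by push_cast; linear_combination hm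
  have hp' : (c:ℝ)*αp^2 + ((d-a:ℤ):ℝ)*αp - (b:ℝ) = 0 := by push_cast; linear_combination hp
  cases v with
  | infty =>
    simp only [mob] at hv
    rw [ha, hc] at hv
    have hcQ : (c:ℚ) ≠ 0 := by exact_mod_cast hc0
    rw [if_neg hcQ] at hv
    have hv' : ((a:ℚ)/(c:ℚ)).den = 1 := hv
    have hdvd : c ∣ a := (Rat.den_div_intCast_eq_one_iff a c hc0).mp hv'
    have hcopac : IsCoprime a c := ⟨d, -b, by linear_combination hdet⟩
    have hcu : c = 1 ∨ c = -1 := Int.isUnit_iff.mp (hcopac.isUnit_of_dvd' hdvd dvd_rfl)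
    have hQ : c*1^2 + (d-a)*1*0 - b*0^2 = 1 ∨ c*1^2 + (d-a)*1*0 - b*0^2 = -1 := by
      rcases hcu with h | h
      · exact Or.inl (by rw [h]; ring)
      · exact Or.inr (by rw [h]; ring)
    obtain ⟨r, s, hadj, hs, hsign⟩ := core a b c d hdet h5 1 0 0 1 (by ring) hQ
    have hs1 : s = 1 := by rcases hadj with h | h <;> omega
    rw [hs1] at hsign
    refine ⟨OnePoint.some (r:ℚ), ?_, ?_⟩
    · show ((r:ℚ)).den = 1
      exact Rat.den_intCast r
    · have hw := inside_iff b c (d-a) αm αp hlt hc0 hm' hp' r 1 one_pos (r:ℚ)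
        (by push_cast; norm_num)
      intro hiff
      have h2 : c * (c*r^2+(d-a)*r*1-b*1^2) < 0 := by nlinarith [hsign]
      have hQrs : ((c:ℤ):ℝ) * ((c*r^2 + (d-a)*r*1 - b*1^2 : ℤ):ℝ) < 0 := by exact_mod_cast h2
      exact hiff.mpr (hw.mpr hQrs)
  | coe x =>
    obtain ⟨p, hpdef⟩ : ∃ t, x.num = t := ⟨_, rfl⟩
    obtain ⟨q, hqdef⟩ : ∃ t, (x.den:ℤ) = t := ⟨_, rfl⟩
    have hq0 : 0 < q := by rw [← hqdef]; exact_mod_cast x.pos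
    have hcop : IsCoprime p q := by
      rw [← hpdef, ← hqdef, Int.isCoprime_iff_gcd_eq_one]
      exact x.reduced
    have hx : x = (p:ℚ)/(q:ℚ) := by
      rw [← hpdef, ← hqdef]; push_cast; exact (Rat.num_div_den x).symm
    have hqQ : (q:ℚ) ≠ 0 := by exact_mod_cast hq0.ne'
    obtain ⟨u, uw, huw⟩ := hcop
    have hbez : p*u - q*(-uw) = 1 := by linear_combination huw
    simp only [mob] at hv
    rw [ha, hb, hc, hd] at hv
    by_cases hcd : (c:ℚ)*x + (d:ℚ) = 0
    · rw [if_pos hcd] at hv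
      have hden1 : x.den = 1 := hv
      have hq1 : q = 1 := by rw [← hqdef, hden1]; norm_num
      have hxp : x = (p:ℚ) := by rw [hx, hq1]; norm_num
      have hcdZ : c*p + d = 0 := by
        rw [hxp] at hcd; exact_mod_cast hcd
      have hεc : (c*p^2 + (d-a)*p*q - b*q^2) * c = 1 := by
        rw [hq1]; linear_combination (c*p - a)*hcdZ + hdet
      have hQ := Int.isUnit_iff.mp (IsUnit.of_mul_eq_one _ hεc)
      exact finish_some a b c d hdet h5 αm αp hlt hc0 hm' hp' x p q hpdef hqdef hq0
        (-uw) u hbez hQ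
    · rw [if_neg hcd] at hv
      have hv' : |x.num * ((((a:ℚ)*x+(b:ℚ))/((c:ℚ)*x+(d:ℚ))).den:ℤ)
          - (x.den:ℤ) * (((a:ℚ)*x+(b:ℚ))/((c:ℚ)*x+(d:ℚ))).num| = 1 := hv
      obtain ⟨N, hN⟩ : ∃ t, a*p + b*q = t := ⟨_, rfl⟩
      obtain ⟨M, hMe⟩ : ∃ t, c*p + d*q = t := ⟨_, rfl⟩
      have hMq : (M:ℚ) = ((c:ℚ)*x + d)*q := by
        rw [← hMe, hx]; push_cast; field_simp
      have hM0 : M ≠ 0 := by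
        intro h0
        rw [h0] at hMq
        rcases mul_eq_zero.mp hMq.symm with h | h
        · exact hcd h
        · exact hqQ h
      have hMQ : ((M:ℤ):ℚ) ≠ 0 := by exact_mod_cast hM0
      have hy : ((a:ℚ)*x+(b:ℚ))/((c:ℚ)*x+(d:ℚ)) = (N:ℚ)/(M:ℚ) := by
        rw [div_eq_div_iff hcd hMQ, ← hN, ← hMe, hx]
        push_cast
        field_simp
      rw [hy, hpdef, hqdef] at hv'
      have hcopNM : IsCoprime N M :=
        ⟨u*d - uw*c, uw*a - u*b, by
          rw [← hN, ← hMe]; linear_combination (u*p + uw*q)*hdet + huw⟩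
      have hv2 := cross_abs N M p q hM0 hcopNM hv'
      have hcross : p*M - q*N = c*p^2 + (d-a)*p*q - b*q^2 := by rw [← hN, ← hMe]; ring
      have hQ : c*p^2 + (d-a)*p*q - b*q^2 = 1 ∨ c*p^2 + (d-a)*p*q - b*q^2 = -1 := by
        rw [← hcross]
        exact (abs_eq (by norm_num)).mp hv2
      exact finish_some a b c d hdet h5 αm αp hlt hc0 hm' hp' x p q hpdef hqdef hq0
        (-uw) u hbez hQ
end

section
/- Let A = [[a,b],[c,d]] ∈ SL(2,ℤ) be hyperbolic (|a+d| > 2), with real fixed points α₋ < α₊. Suppose v ∈ ℚ ∪ {∞} is such that v and A·v are Farey-adjacent. Then every point w ∈ ℚ ∪ {∞} that lies on the same side of the axis as v and is Farey-adjacent to some point on the opposite side of the axis satisfies w = Aⁿ·v for some integer n; that is, every visible vertex on the same side of the axis as v is A-equivalent to v. -/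
open OnePoint Matrix

namespace VV


/-- action of a 2×2 integer matrix on a pair -/
def act (M : Matrix (Fin 2) (Fin 2) ℤ) (z : ℤ × ℤ) : ℤ × ℤ :=
  (M 0 0 * z.1 + M 0 1 * z.2, M 1 0 * z.1 + M 1 1 * z.2)

/-- determinant pairing -/
def dt (z w : ℤ × ℤ) : ℤ := z.1 * w.2 - z.2 * w.1

/-- the fixed quadratic form of `M` -/
def Ff (M : Matrix (Fin 2) (Fin 2) ℤ) (z : ℤ × ℤ) : ℤ := dt z (act M z)

lemma Ff_expand (M : Matrix (Fin 2) (Fin 2) ℤ) (z : ℤ × ℤ) :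
    Ff M z = M 1 0 * z.1^2 + (M 1 1 - M 0 0) * z.1 * z.2 - M 0 1 * z.2^2 := by
  simp only [Ff, dt, act]; ring

lemma act_mul (M N : Matrix (Fin 2) (Fin 2) ℤ) (z : ℤ × ℤ) :
    act (M * N) z = act M (act N z) := by
  simp only [act, Matrix.mul_apply, Fin.sum_univ_two]
  exact Prod.ext (by ring) (by ring)

lemma act_one (z : ℤ × ℤ) : act 1 z = z := by
  simp [act]

lemma act_neg (M : Matrix (Fin 2) (Fin 2) ℤ) (z : ℤ × ℤ) :
    act (-M) z = - act M z := by
  simp only [act, Matrix.neg_apply, Prod.neg_mk]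
  exact Prod.ext (by simp; ring) (by simp; ring)

lemma act_neg_vec (M : Matrix (Fin 2) (Fin 2) ℤ) (z : ℤ × ℤ) :
    act M (-z) = - act M z := by
  have : (-z : ℤ × ℤ) = (-z.1, -z.2) := rfl
  rw [this]
  simp only [act, Prod.neg_mk]
  exact Prod.ext (by simp; ring) (by simp; ring)

lemma act_cancel (B : SL2Z) (z : ℤ × ℤ) : act (B⁻¹).1 (act B.1 z) = z := by
  rw [← act_mul]
  have : ((B⁻¹ : SL2Z) : Matrix (Fin 2) (Fin 2) ℤ) * (B : Matrix (Fin 2) (Fin 2) ℤ) = 1 := by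
    rw [← Matrix.SpecialLinearGroup.coe_mul, inv_mul_cancel,
      Matrix.SpecialLinearGroup.coe_one]
  rw [this, act_one]

lemma coe_inv_entries (B : SL2Z) :
    ((B⁻¹ : SL2Z) : Matrix (Fin 2) (Fin 2) ℤ) =
      !![B.1 1 1, -B.1 0 1; -B.1 1 0, B.1 0 0] := by
  rw [Matrix.SpecialLinearGroup.SL2_inv_expl]
  ext i j
  fin_cases i <;> fin_cases j <;> simp

lemma det_entries (B : SL2Z) : B.1 0 0 * B.1 1 1 - B.1 0 1 * B.1 1 0 = 1 := by
  have := B.2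
  rwa [Matrix.det_fin_two] at this

/-- coprimality is preserved by the action -/
lemma act_coprime (B : SL2Z) {z : ℤ × ℤ} (h : IsCoprime z.1 z.2) :
    IsCoprime (act B.1 z).1 (act B.1 z).2 := by
  obtain ⟨u, v, huv⟩ := h
  refine ⟨u * B.1 1 1 - v * B.1 1 0, v * B.1 0 0 - u * B.1 0 1, ?_⟩
  have hd := det_entries B
  simp only [act]
  linear_combination (B.1 0 0 * B.1 1 1 - B.1 0 1 * B.1 1 0) * huv + hd

/-- the form never vanishes on nonzero primitive vectors when the trace is large -/
lemma Ff_ne_zero (B : SL2Z) (htr : 3 ≤ |B.1 0 0 + B.1 1 1|) (hc : B.1 1 0 ≠ 0)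
    {z : ℤ × ℤ} (hz : IsCoprime z.1 z.2) : Ff B.1 z ≠ 0 := by
  set a := B.1 0 0; set b := B.1 0 1; set c := B.1 1 0; set d := B.1 1 1
  have hd : a * d - b * c = 1 := det_entries B
  intro h0
  rw [Ff_expand] at h0
  rcases eq_or_ne z.2 0 with h2 | h2
  · rw [h2] at h0
    have hz1 : IsUnit z.1 := by
      have := hz; rw [h2] at this
      exact (isCoprime_zero_right).mp this
    rcases Int.isUnit_iff.mp hz1 with h | h <;> rw [h] at h0 <;> simp at h0 <;> omega
  · -- (2 c z₁ + (d-a) z₂)² = ((a+d)² - 4) z₂²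
    have key : (2*c*z.1 + (d-a)*z.2)^2 = ((a+d)^2 - 4) * z.2^2 := by
      have expand : (2*c*z.1 + (d-a)*z.2)^2 =
          ((a+d)^2 - 4*(a*d - b*c)) * z.2^2
          + 4*c*(c * z.1^2 + (d - a) * z.1 * z.2 - b * z.2^2) := by ring
      rw [expand, h0, hd]; ring
    have hdvd : z.2 ∣ (2*c*z.1 + (d-a)*z.2) := by
      have : z.2^2 ∣ (2*c*z.1 + (d-a)*z.2)^2 := ⟨(a+d)^2 - 4, by rw [key]; ring⟩
      exact (Int.pow_dvd_pow_iff (two_ne_zero)).mp this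
    obtain ⟨k, hk⟩ := hdvd
    have hk2 : k^2 = (a+d)^2 - 4 := by
      have : z.2^2 * k^2 = z.2^2 * ((a+d)^2 - 4) := by
        rw [← mul_pow, ← hk, key]; ring
      exact mul_left_cancel₀ (pow_ne_zero 2 h2) this
    -- contradiction : (|τ|-1)² < k² < |τ|²
    set K := |k| with hK
    set T := |a + d| with hT
    have hKk : K^2 = k^2 := sq_abs k
    have hTt : T^2 = (a+d)^2 := sq_abs (a+d)
    have h1 : K^2 = T^2 - 4 := by rw [hKk, hTt]; linarith [hk2]
    have hK0 : 0 ≤ K := abs_nonneg k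
    have hT3 : 3 ≤ T := htr
    have hKT : K < T := by nlinarith [hK0, hT3, h1]
    have : K ≤ T - 1 := by omega
    nlinarith



/-- The standard form `m^2 + t m n + n^2`. -/
def Gf (t m n : ℤ) : ℤ := m^2 + t*m*n + n^2

/-- The orbit of `(1,0)` under `±T^j` where `T (m,n) = (-n, m+tn)`. -/
inductive Orb (t : ℤ) : ℤ → ℤ → Prop
  | base : Orb t 1 0
  | neg {m n : ℤ} : Orb t m n → Orb t (-m) (-n)
  | up {m n : ℤ} : Orb t m n → Orb t (-n) (m + t*n)
  | down {m n : ℤ} : Orb t m n → Orb t (n + t*m) (-m)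

lemma Orb.swap {t m n : ℤ} (h : Orb t m n) : Orb t n m := by
  induction h with
  | base => simpa using Orb.up (t := t) Orb.base
  | neg _ ih => exact ih.neg
  | up _ ih => simpa [mul_comm] using ih.down
  | down _ ih => simpa [mul_comm] using ih.up

/-- key descent inequality -/
lemma key_ineq {t m n : ℤ} (ht : 3 ≤ t) (hm : m ≤ -1) (hmn : 0 < m + n)
    (hG : 0 < Gf t m n) : 0 < t*m + 2*n := by
  by_contra h
  push_neg at h
  have hn : 0 < n := by linarith
  have : t*m*n ≤ -2*n*n := by nlinarith
  have : Gf t m n ≤ m^2 - n^2 := by simp only [Gf]; nlinarith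
  nlinarith [hG]

lemma core' (t : ℤ) (ht : 3 ≤ t) :
    ∀ N : ℕ, ∀ m n k l : ℤ, m.natAbs + n.natAbs ≤ N → 0 < n →
      0 < Gf t m n → Gf t k l < 0 → (m*l - n*k = 1 ∨ m*l - n*k = -1) →
      Orb t m n := by
  intro N
  induction N using Nat.strong_induction_on with
  | _ N IH =>
    intro m n k l hN hn hG hGu hdet
    -- partner normalization: l ≠ 0, and wlog l > 0 with k ≤ -1
    have hl0 : l ≠ 0 := by
      rintro rfl
      simp only [Gf] at hGu; nlinarith
    have hk0 : k ≠ 0 := by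
      rintro rfl
      simp only [Gf] at hGu; nlinarith
    -- we can replace (k,l) by (-k,-l) to assume 0 < l
    wlog hl : 0 < l generalizing k l
    · refine this (-k) (-l) ?_ ?_ ?_ ?_ ?_
      · simp only [Gf] at hGu ⊢; nlinarith
      · rcases hdet with h | h
        · right; linarith
        · left; linarith
      · omega
      · omega
      · omega
    have hkneg : k ≤ -1 := by
      rcases lt_or_gt_of_ne hk0 with h | h
      · omega
      · exfalso; simp only [Gf] at hGu
        nlinarith [mul_pos h hl, mul_nonneg (mul_nonneg (by linarith : (0:ℤ) ≤ t-3) h.le) hl.le]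
    rcases lt_trichotomy m 0 with hmneg | rfl | hmpos
    · -- m ≤ -1
      have hm1 : m ≤ -1 := by omega
      rcases lt_trichotomy (m + n) 0 with hmn | hmn | hmn
      · -- case B : x < β; use swapped-negated vector
        have hkey : 0 < t*(-n) + 2*(-m) := by
          have := key_ineq ht (t := t) (m := -n) (n := -m) (by omega) (by omega)
            (by simpa [Gf, mul_comm, mul_left_comm, mul_assoc] using
              (by simp only [Gf] at hG ⊢; nlinarith : (0:ℤ) < Gf t (-n) (-m)))
          exact this
        -- new vector (m₂,n₂) = (-(m+t*n), n), partner (-k-t*l, l)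
        have hsize : (-(m+t*n)).natAbs + n.natAbs < N := by
          have h1 : m < m + t*n := by nlinarith
          have h2 : m + t*n < -m := by linarith
          omega
        have hG2 : 0 < Gf t (-(m+t*n)) n := by
          simp only [Gf] at hG ⊢; nlinarith
        have hGu2 : Gf t (-k-t*l) l < 0 := by
          simp only [Gf] at hGu ⊢; nlinarith
        have hdet2 : (-(m+t*n))*l - n*(-k-t*l) = 1 ∨ (-(m+t*n))*l - n*(-k-t*l) = -1 := by
          rcases hdet with h | h
          · right; linarith [h]; 
          · left; linarith [h]
        have horb := IH _ hsize (-(m+t*n)) n (-k-t*l) l le_rfl hn hG2 hGu2 hdet2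
        -- recover: up (m₂, n₂) = (-n, -m), then neg, then swap
        have h1 : Orb t (-n) (-(m+t*n) + t*n) := horb.up
        have h2 : Orb t (-n) (-m) := by
          have : -(m+t*n) + t*n = -m := by ring
          rwa [this] at h1
        simpa using h2.neg.swap
      · -- m + n = 0 impossible: Gf = (2-t) n^2 < 0
        exfalso
        have hm' : m = -n := by omega
        simp only [Gf, hm'] at hG
        nlinarith
      · -- case A : descent with T⁻¹
        have hkey : 0 < t*m + 2*n := key_ineq ht hm1 hmn hG
        have hsize : (n + t*m).natAbs + (-m).natAbs < N := by
          have h1 : n + t*m < n := by nlinarith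
          have h2 : -n < n + t*m := by linarith
          omega
        have hG2 : 0 < Gf t (n + t*m) (-m) := by
          simp only [Gf] at hG ⊢; nlinarith
        have hGu2 : Gf t (l + t*k) (-k) < 0 := by
          simp only [Gf] at hGu ⊢; nlinarith
        have hdet2 : (n + t*m)*(-k) - (-m)*(l + t*k) = 1 ∨
            (n + t*m)*(-k) - (-m)*(l + t*k) = -1 := by
          rcases hdet with h | h
          · left; linarith [h]
          · right; linarith [h]
        have horb := IH _ hsize (n + t*m) (-m) (l + t*k) (-k) le_rfl (by omega) hG2 hGu2 hdet2
        have h1 : Orb t (-(-m)) ((n + t*m) + t*(-m)) := horb.up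
        have h2 : Orb t m n := by
          have e1 : -(-m) = m := by ring
          have e2 : (n + t*m) + t*(-m) = n := by ring
          rwa [e1, e2] at h1
        exact h2
    · -- m = 0 : then n = 1
      have hnk : n * (-k) = 1 := by
        have hle : n * k ≤ -1 := by nlinarith
        rcases hdet with h | h
        · linarith
        · nlinarith
      have hn1 : n = 1 := Int.eq_one_of_mul_eq_one_right (by omega) hnk
      subst hn1
      simpa using Orb.up (t := t) Orb.base
    · -- m ≥ 1 : impossible
      exfalso
      have : m*l - n*k ≥ 2 := by nlinarith
      omega

lemma core {t : ℤ} (ht : 3 ≤ t) {m n k l : ℤ} (hG : 0 < Gf t m n)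
    (hGu : Gf t k l < 0) (hdet : m*l - n*k = 1 ∨ m*l - n*k = -1) :
    Orb t m n := by
  rcases lt_trichotomy n 0 with hn | rfl | hn
  · have := core' t ht ((-m).natAbs + (-n).natAbs) (-m) (-n) (-k) (-l) le_rfl (by omega)
      (by simp only [Gf] at hG ⊢; nlinarith)
      (by simp only [Gf] at hGu ⊢; nlinarith)
      (by rcases hdet with h | h
          · left; linarith
          · right; linarith)
    simpa using this.neg
  · -- n = 0 : m = ±1
    have : m * l = 1 ∨ m * l = -1 := by simpa using hdet
    have hm : m = 1 ∨ m = -1 := by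
      rcases this with h | h
      · rcases Int.eq_one_or_neg_one_of_mul_eq_one' h with ⟨h1, _⟩ | ⟨h1, _⟩
        · exact Or.inl h1
        · exact Or.inr h1
      · rcases Int.eq_one_or_neg_one_of_mul_eq_neg_one' h with ⟨h1, _⟩ | ⟨h1, _⟩
        · exact Or.inl h1
        · exact Or.inr h1
    rcases hm with rfl | rfl
    · exact Orb.base
    · simpa using (Orb.base (t := t)).neg
  · exact core' t ht _ m n k l le_rfl hn hG hGu hdet


/-- integer combination of two vectors -/
def cmb (e₁ e₂ : ℤ × ℤ) (m n : ℤ) : ℤ × ℤ := (m*e₁.1 + n*e₂.1, m*e₁.2 + n*e₂.2)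

lemma cmb_one_zero (e₁ e₂ : ℤ × ℤ) : cmb e₁ e₂ 1 0 = e₁ := by
  simp only [cmb]; exact Prod.ext (by ring) (by ring)

lemma cmb_neg (e₁ e₂ : ℤ × ℤ) (m n : ℤ) : cmb e₁ e₂ (-m) (-n) = - cmb e₁ e₂ m n := by
  simp only [cmb, Prod.neg_mk]; exact Prod.ext (by simp; ring) (by simp; ring)

lemma cramer {e₁ e₂ : ℤ × ℤ} (h : dt e₁ e₂ = 1) (z : ℤ × ℤ) :
    z = cmb e₁ e₂ (dt z e₂) (dt e₁ z) := by
  simp only [cmb, dt] at *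
  exact Prod.ext (by linear_combination (-z.1) * h) (by linear_combination (-z.2) * h)

lemma dt_cmb (e₁ e₂ : ℤ × ℤ) (m n k l : ℤ) :
    dt (cmb e₁ e₂ m n) (cmb e₁ e₂ k l) = (m*l - n*k) * dt e₁ e₂ := by
  simp only [cmb, dt]; ring

lemma dt_neg_right (z w : ℤ × ℤ) : dt z (-w) = - dt z w := by
  have : (-w : ℤ × ℤ) = (-w.1, -w.2) := rfl
  rw [this]; simp only [dt]; simp; ring

/-- the quadratic form in the basis `(e₁, B e₁)` is `m² + t m n + n²` times `Ff e₁` -/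
lemma Ff_cmb (B : SL2Z) (e₁ : ℤ × ℤ) (m n : ℤ) :
    Ff B.1 (cmb e₁ (act B.1 e₁) m n)
      = Gf (B.1 0 0 + B.1 1 1) m n * Ff B.1 e₁ := by
  have hd := det_entries B
  simp only [Ff, dt, act, cmb, Gf]
  linear_combination (n^2 * (B.1 1 0 * e₁.1^2 + (B.1 1 1 - B.1 0 0) * e₁.1 * e₁.2
    - B.1 0 1 * e₁.2^2)) * hd

/-- the action of `B` in the basis `(e₁, B e₁)` -/
lemma act_cmb_up (B : SL2Z) (e₁ : ℤ × ℤ) (m n : ℤ) :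
    act B.1 (cmb e₁ (act B.1 e₁) m n)
      = cmb e₁ (act B.1 e₁) (-n) (m + (B.1 0 0 + B.1 1 1)*n) := by
  have hd := det_entries B
  simp only [act, cmb]
  exact Prod.ext (by linear_combination (-(n * e₁.1)) * hd)
    (by linear_combination (-(n * e₁.2)) * hd)

section orb
/-- the orbit set -/
lemma orb_act (B : SL2Z) (e₁ : ℤ × ℤ) {m n : ℤ}
    (h : Orb (B.1 0 0 + B.1 1 1) m n) :
    ∃ j : ℤ, act ((B^j : SL2Z)).1 e₁ = cmb e₁ (act B.1 e₁) m n ∨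
      act ((B^j : SL2Z)).1 e₁ = - cmb e₁ (act B.1 e₁) m n := by
  set t := B.1 0 0 + B.1 1 1 with hT
  induction h with
  | base =>
      refine ⟨0, Or.inl ?_⟩
      rw [zpow_zero, Matrix.SpecialLinearGroup.coe_one, act_one, cmb_one_zero]
  | neg h ih =>
      rename_i mm nn
      obtain ⟨j, hj | hj⟩ := ih
      · exact ⟨j, Or.inr (by rw [cmb_neg, neg_neg, hj])⟩
      · exact ⟨j, Or.inl (by rw [cmb_neg, hj])⟩
  | up h ih =>
      rename_i mm nn
      obtain ⟨j, hj | hj⟩ := ih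
      · refine ⟨j + 1, Or.inl ?_⟩
        have hB : (B^(j+1) : SL2Z) = B * B^j := by group
        rw [hB, Matrix.SpecialLinearGroup.coe_mul, act_mul, hj, act_cmb_up]
      · refine ⟨j + 1, Or.inr ?_⟩
        have hB : (B^(j+1) : SL2Z) = B * B^j := by group
        rw [hB, Matrix.SpecialLinearGroup.coe_mul, act_mul, hj, act_neg_vec, act_cmb_up]
  | down h ih =>
      rename_i m' n'
      obtain ⟨j, hj | hj⟩ := ih
      · refine ⟨j - 1, Or.inl ?_⟩
        have hB : (B^(j-1) : SL2Z) = B⁻¹ * B^j := by group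
        rw [hB, Matrix.SpecialLinearGroup.coe_mul, act_mul, hj]
        have step := act_cmb_up B e₁ (n' + t*m') (-m')
        have harg : cmb e₁ (act B.1 e₁) (-(-m')) ((n' + t*m') + t*(-m'))
            = cmb e₁ (act B.1 e₁) m' n' := by
          congr 1 <;> ring
        rw [harg] at step
        rw [← step, act_cancel]
      · refine ⟨j - 1, Or.inr ?_⟩
        have hB : (B^(j-1) : SL2Z) = B⁻¹ * B^j := by group
        rw [hB, Matrix.SpecialLinearGroup.coe_mul, act_mul, hj]
        have step := act_cmb_up B e₁ (n' + t*m') (-m')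
        have harg : cmb e₁ (act B.1 e₁) (-(-m')) ((n' + t*m') + t*(-m'))
            = cmb e₁ (act B.1 e₁) m' n' := by
          congr 1 <;> ring
        rw [harg] at step
        rw [act_neg_vec, ← step, act_cancel]
end orb

/-- `Ff` of the inverse is the negative -/
lemma Ff_inv (B : SL2Z) (z : ℤ × ℤ) : Ff (B⁻¹ : SL2Z).1 z = - Ff B.1 z := by
  rw [Ff_expand, Ff_expand, coe_inv_entries]
  simp [Matrix.cons_val_zero, Matrix.cons_val_one, Matrix.head_cons]
  ring

lemma Ff_neg_mat (B : SL2Z) (z : ℤ × ℤ) : Ff (-B : SL2Z).1 z = - Ff B.1 z := by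
  rw [Ff_expand, Ff_expand, Matrix.SpecialLinearGroup.coe_neg]
  simp only [Matrix.neg_apply]
  ring

lemma inv_entries_trace (B : SL2Z) :
    (B⁻¹ : SL2Z).1 0 0 + (B⁻¹ : SL2Z).1 1 1 = B.1 0 0 + B.1 1 1 := by
  rw [coe_inv_entries]; simp [add_comm]

lemma neg_entries_trace (B : SL2Z) :
    (-B : SL2Z).1 0 0 + (-B : SL2Z).1 1 1 = -(B.1 0 0 + B.1 1 1) := by
  rw [Matrix.SpecialLinearGroup.coe_neg]; simp [Matrix.neg_apply]; ring

lemma neg_one_mul_SL (X : SL2Z) : (-1 : SL2Z) * X = -X := by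
  apply Subtype.ext
  rw [Matrix.SpecialLinearGroup.coe_mul, Matrix.SpecialLinearGroup.coe_neg,
    Matrix.SpecialLinearGroup.coe_neg, Matrix.SpecialLinearGroup.coe_one]
  exact neg_one_mul _

lemma commute_neg_one (X : SL2Z) : Commute (-1 : SL2Z) X := by
  unfold Commute SemiconjBy
  apply Subtype.ext
  rw [Matrix.SpecialLinearGroup.coe_mul, Matrix.SpecialLinearGroup.coe_mul,
    Matrix.SpecialLinearGroup.coe_neg, Matrix.SpecialLinearGroup.coe_one]
  simp

lemma neg_one_zpow (j : ℤ) : ((-1 : SL2Z))^j = 1 ∨ ((-1 : SL2Z))^j = -1 := by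
  have hsq : (-1 : SL2Z) * (-1 : SL2Z) = 1 := by
    rw [neg_one_mul_SL, neg_neg]
  rcases Int.even_or_odd j with ⟨r, hr⟩ | ⟨r, hr⟩
  · left
    rw [hr, _root_.zpow_add, ← Commute.mul_zpow (Commute.refl (-1 : SL2Z)), hsq, _root_.one_zpow]
  · right
    rw [hr, _root_.zpow_add, zpow_one,
      show (2*r : ℤ) = r + r by ring, _root_.zpow_add,
      ← Commute.mul_zpow (Commute.refl (-1 : SL2Z)), hsq, _root_.one_zpow, one_mul]

lemma neg_zpow (X : SL2Z) (j : ℤ) :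
    ((-X : SL2Z)^j).1 = ((X^j : SL2Z)).1 ∨ ((-X : SL2Z)^j).1 = -((X^j : SL2Z)).1 := by
  have h1 : (-X : SL2Z) = (-1) * X := (neg_one_mul_SL X).symm
  rw [h1, Commute.mul_zpow (commute_neg_one X) j]
  rcases neg_one_zpow j with h | h
  · left; rw [h, one_mul]
  · right
    rw [h, neg_one_mul_SL, Matrix.SpecialLinearGroup.coe_neg]

def vec : OnePoint ℚ → ℤ × ℤ
  | OnePoint.infty => (1, 0)
  | OnePoint.some x => (x.num, (x.den : ℤ))

def toOP (z : ℤ × ℤ) : OnePoint ℚ :=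
  if z.2 = 0 then OnePoint.infty else OnePoint.some ((z.1 : ℚ) / (z.2 : ℚ))

lemma toOP_vec (v : OnePoint ℚ) : toOP (vec v) = v := by
  cases v with
  | infty => rfl
  | coe x =>
      simp only [vec, toOP]
      show (if (x.den : ℤ) = 0 then OnePoint.infty else OnePoint.some ((x.num : ℚ) / ((x.den : ℤ) : ℚ))) = _
      rw [if_neg (by exact_mod_cast x.den_ne_zero)]
      congr 1
      push_cast
      exact Rat.num_div_den x

lemma toOP_neg (z : ℤ × ℤ) : toOP (-z) = toOP z := by
  have h1 : (-z).1 = -z.1 := rfl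
  have h2 : (-z).2 = -z.2 := rfl
  simp only [toOP, h1, h2, neg_eq_zero]
  rcases eq_or_ne z.2 0 with h | h
  · simp [h]
  · rw [if_neg h, if_neg h]
    push_cast
    rw [neg_div_neg_eq]

lemma vec_coprime (v : OnePoint ℚ) : IsCoprime (vec v).1 (vec v).2 := by
  cases v with
  | infty => exact isCoprime_one_left
  | coe x =>
      rw [Int.isCoprime_iff_gcd_eq_one]
      exact x.reduced

lemma vec_toOP {z : ℤ × ℤ} (hz : IsCoprime z.1 z.2) :
    vec (toOP z) = z ∨ vec (toOP z) = -z := by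
  rcases eq_or_ne z.2 0 with h2 | h2
  · have hz1 : IsUnit z.1 := isCoprime_zero_right.mp (by rwa [h2] at hz)
    have hneg : (-z : ℤ × ℤ) = (-z.1, -z.2) := rfl
    rcases Int.isUnit_iff.mp hz1 with h | h
    · left
      simp only [toOP, if_pos h2, vec]
      exact Prod.ext (by simp [h]) (by simp [h2])
    · right
      simp only [toOP, if_pos h2, vec, hneg]
      exact Prod.ext (by simp [h]) (by simp [h2])
  · have hcop : z.1.natAbs.Coprime z.2.natAbs := by
      rwa [Int.isCoprime_iff_gcd_eq_one] at hz
    rcases lt_or_gt_of_ne h2 with hneg | hpos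
    · right
      have hpos' : 0 < -z.2 := by omega
      have hcop' : (-z.1).natAbs.Coprime (-z.2).natAbs := by
        simpa [Int.natAbs_neg] using hcop
      have hdivrw : (z.1 : ℚ) / (z.2 : ℚ) = ((-z.1 : ℤ) : ℚ) / ((-z.2 : ℤ) : ℚ) := by
        push_cast; rw [neg_div_neg_eq]
      have hnegz : (-z : ℤ × ℤ) = (-z.1, -z.2) := rfl
      simp only [toOP, if_neg h2, vec, hdivrw, hnegz]
      have hn := Rat.num_div_eq_of_coprime hpos' hcop'
      have hd := Rat.den_div_eq_of_coprime hpos' hcop'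
      exact Prod.ext (by simpa using hn) (by simpa using hd)
    · left
      simp only [toOP, if_neg h2, vec]
      have hn := Rat.num_div_eq_of_coprime hpos hcop
      have hd := Rat.den_div_eq_of_coprime hpos hcop
      exact Prod.ext (by simpa using hn) (by simpa using hd)

lemma fareyAdj_iff (v₁ v₂ : OnePoint ℚ) :
    fareyAdj v₁ v₂ ↔ |dt (vec v₁) (vec v₂)| = 1 := by
  cases v₁ with
  | infty =>
      cases v₂ with
      | infty => simp [fareyAdj, dt, vec]
      | coe x =>
          show x.den = 1 ↔ |1 * (x.den : ℤ) - 0 * x.num| = 1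
          rw [one_mul, zero_mul, sub_zero, abs_of_nonneg (by positivity)]
          exact_mod_cast Iff.rfl
  | coe x =>
      cases v₂ with
      | infty =>
          show x.den = 1 ↔ |x.num * 0 - (x.den : ℤ) * 1| = 1
          rw [mul_zero, mul_one, zero_sub, abs_neg, abs_of_nonneg (by positivity)]
          exact_mod_cast Iff.rfl
      | coe y => exact Iff.rfl

lemma mob_eq (B : SL2Z) (v : OnePoint ℚ) : mob B v = toOP (act B.1 (vec v)) := by
  cases v with
  | infty =>
      show _ = toOP (B.1 0 0 * 1 + B.1 0 1 * 0, B.1 1 0 * 1 + B.1 1 1 * 0)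
      simp only [mul_one, mul_zero, add_zero]
      rcases eq_or_ne (B.1 1 0) 0 with h | h
      · simp [mob, toOP, h]
      · simp only [mob, toOP, if_neg h, if_neg (by exact_mod_cast h : (B.1 1 0 : ℚ) ≠ 0)]
  | coe x =>
      set a := B.1 0 0; set b := B.1 0 1; set c := B.1 1 0; set d := B.1 1 1
      have hden : ((x.den : ℤ) : ℚ) ≠ 0 := by exact_mod_cast x.den_ne_zero
      have hx : (x : ℚ) = (x.num : ℚ) / ((x.den : ℤ) : ℚ) := by
        push_cast
        exact (Rat.num_div_den x).symm
      have hnum : ((x.num : ℚ)) = x * ((x.den : ℕ) : ℚ) := by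
        calc (x.num : ℚ) = ((x.num : ℚ) / (x.den : ℚ)) * (x.den : ℚ) := by
              field_simp
          _ = x * (x.den : ℚ) := by rw [Rat.num_div_den x]
      show _ = toOP (a * x.num + b * (x.den : ℤ), c * x.num + d * (x.den : ℤ))
      rcases eq_or_ne (c * x.num + d * (x.den : ℤ)) 0 with h | h
      · have hQ : (c : ℚ) * x + d = 0 := by
          rw [hx]
          field_simp
          have h2 : ((c * x.num + d * (x.den : ℤ) : ℤ) : ℚ) = 0 := by exact_mod_cast h
          push_cast at h2 ⊢
          linear_combination h2
        have htoOP : toOP (a * x.num + b * (x.den : ℤ), c * x.num + d * (x.den : ℤ))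
            = OnePoint.infty := if_pos h
        rw [htoOP]
        simp only [mob]
        exact if_pos hQ
      · have hQ : (c : ℚ) * x + d ≠ 0 := by
          intro hc
          apply h
          rw [hx] at hc
          field_simp at hc
          have hc2 : ((c * x.num + d * (x.den : ℤ) : ℤ) : ℚ) = 0 := by
            push_cast at hc ⊢
            linear_combination hc
          exact_mod_cast hc2
        have h' : ((c * x.num + d * (x.den : ℤ) : ℤ) : ℚ) ≠ 0 := by exact_mod_cast h
        have htoOP : toOP (a * x.num + b * (x.den : ℤ), c * x.num + d * (x.den : ℤ))
            = OnePoint.some (((a * x.num + b * (x.den : ℤ) : ℤ) : ℚ)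
              / ((c * x.num + d * (x.den : ℤ) : ℤ) : ℚ)) := if_neg h
        rw [htoOP]
        simp only [mob, if_neg hQ]
        show (if (c : ℚ) * x + d = 0 then OnePoint.infty
          else OnePoint.some (((a : ℚ) * x + b) / ((c : ℚ) * x + d))) = _
        rw [if_neg hQ]
        congr 1
        rw [div_eq_div_iff hQ h']
        push_cast
        rw [hnum]
        ring

/-- replace `A` by one of `A, A⁻¹, -A, -A⁻¹` to make the trace `≥ 3` and the
form take value `1` at the given vector -/
lemma normalize (A : SL2Z) (habs : 3 ≤ |A.1 0 0 + A.1 1 1|) (z : ℤ × ℤ)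
    (hε : Ff A.1 z = 1 ∨ Ff A.1 z = -1) :
    ∃ B : SL2Z, 3 ≤ B.1 0 0 + B.1 1 1 ∧ Ff B.1 z = 1 ∧
      (∃ η : ℤ, (η = 1 ∨ η = -1) ∧ ∀ y, Ff B.1 y = η * Ff A.1 y) ∧
      (∀ j : ℤ, ∃ n : ℤ, ((B^j : SL2Z)).1 = ((A^n : SL2Z)).1 ∨
        ((B^j : SL2Z)).1 = -((A^n : SL2Z)).1) := by
  have htr : 3 ≤ A.1 0 0 + A.1 1 1 ∨ A.1 0 0 + A.1 1 1 ≤ -3 := by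
    rcases abs_cases (A.1 0 0 + A.1 1 1) with ⟨h1, h2⟩ | ⟨h1, h2⟩ <;> omega
  rcases htr with htr | htr
  · rcases hε with hε | hε
    · exact ⟨A, htr, hε, ⟨1, Or.inl rfl, fun y => by ring⟩,
        fun j => ⟨j, Or.inl rfl⟩⟩
    · refine ⟨A⁻¹, by rw [inv_entries_trace]; exact htr, by rw [Ff_inv, hε]; ring,
        ⟨-1, Or.inr rfl, fun y => by rw [Ff_inv]; ring⟩, fun j => ⟨-j, Or.inl ?_⟩⟩
      rw [_root_.inv_zpow, ← _root_.zpow_neg]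
  · rcases hε with hε | hε
    · refine ⟨-A⁻¹, ?_, ?_, ⟨1, Or.inl rfl, fun y => by rw [Ff_neg_mat, Ff_inv]; ring⟩,
        fun j => ?_⟩
      · rw [neg_entries_trace, inv_entries_trace]; omega
      · rw [Ff_neg_mat, Ff_inv, hε]; ring
      · rcases neg_zpow A⁻¹ j with h | h
        · exact ⟨-j, Or.inl (by rw [h, _root_.inv_zpow, ← _root_.zpow_neg])⟩
        · exact ⟨-j, Or.inr (by rw [h, _root_.inv_zpow, ← _root_.zpow_neg])⟩
    · refine ⟨-A, ?_, ?_, ⟨-1, Or.inr rfl, fun y => by rw [Ff_neg_mat]; ring⟩,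
        fun j => ?_⟩
      · rw [neg_entries_trace]; omega
      · rw [Ff_neg_mat, hε]; ring
      · rcases neg_zpow A j with h | h
        · exact ⟨j, Or.inl h⟩
        · exact ⟨j, Or.inr h⟩

/-- helper for sign bookkeeping -/
lemma same_sign_of_iff {c P Q : ℤ} (hc : c ≠ 0) (hP : P ≠ 0) (hQ : Q ≠ 0)
    (h : (c*P < 0) ↔ (c*Q < 0)) : 0 < P*Q := by
  have hc2 : 0 < c*c := mul_self_pos.mpr hc
  have hcP : c*P ≠ 0 := mul_ne_zero hc hP
  have hcQ : c*Q ≠ 0 := mul_ne_zero hc hQ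
  have hpos : 0 < (c*P)*(c*Q) := by
    by_cases hcp : c*P < 0
    · exact mul_pos_of_neg_of_neg hcp (h.mp hcp)
    · have h1 : 0 < c*P := lt_of_le_of_ne (not_lt.mp hcp) (Ne.symm hcP)
      have h2 : ¬ (c*Q < 0) := fun hq => hcp (h.mpr hq)
      exact mul_pos h1 (lt_of_le_of_ne (not_lt.mp h2) (Ne.symm hcQ))
  by_contra hle
  push_neg at hle
  nlinarith

lemma opp_sign_of_not_iff {c P Q : ℤ} (hc : c ≠ 0) (hP : P ≠ 0) (hQ : Q ≠ 0)
    (h : ¬ ((c*P < 0) ↔ (c*Q < 0))) : P*Q < 0 := by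
  have hc2 : 0 < c*c := mul_self_pos.mpr hc
  have hcP : c*P ≠ 0 := mul_ne_zero hc hP
  have hcQ : c*Q ≠ 0 := mul_ne_zero hc hQ
  have hneg : (c*P)*(c*Q) < 0 := by
    by_cases hcp : c*P < 0
    · have h2 : ¬ (c*Q < 0) := fun hq => h ⟨fun _ => hq, fun _ => hcp⟩
      exact mul_neg_of_neg_of_pos hcp (lt_of_le_of_ne (not_lt.mp h2) (Ne.symm hcQ))
    · have h1 : 0 < c*P := lt_of_le_of_ne (not_lt.mp hcp) (Ne.symm hcP)
      have h2 : c*Q < 0 := by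
        by_contra hq
        exact h ⟨fun hp => absurd hp hcp, fun hq2 => absurd hq2 hq⟩
      exact mul_neg_of_pos_of_neg h1 h2
  nlinarith

end VV

theorem visible_vertices_same_side_equivalent (A : SL2Z)
    (hyp : |A.1 0 0 + A.1 1 1| > 2)
    (αm αp : ℝ) (hlt : αm < αp)
    (hm : (A.1 1 0 : ℝ) * αm ^ 2 + ((A.1 1 1 : ℝ) - (A.1 0 0 : ℝ)) * αm - (A.1 0 1 : ℝ) = 0)
    (hp : (A.1 1 0 : ℝ) * αp ^ 2 + ((A.1 1 1 : ℝ) - (A.1 0 0 : ℝ)) * αp - (A.1 0 1 : ℝ) = 0)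
    (v : OnePoint ℚ) (hv : fareyAdj v (mob A v)) :
    ∀ w : OnePoint ℚ,
      (insideAxis αm αp w ↔ insideAxis αm αp v) →
      (∃ u : OnePoint ℚ, fareyAdj w u ∧ ¬ (insideAxis αm αp u ↔ insideAxis αm αp w)) →
      ∃ n : ℤ, mob (A ^ n) v = w := by
  intro w hside hvis
  obtain ⟨u, hadj, hop⟩ := hvis
  have hdet := VV.det_entries A
  have habs : 3 ≤ |A.1 0 0 + A.1 1 1| := hyp
  -- the lower-left entry is nonzero
  have hc : A.1 1 0 ≠ 0 := by
    intro h
    rw [h, mul_zero, sub_zero] at hdet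
    rcases Int.eq_one_or_neg_one_of_mul_eq_one' hdet with ⟨h1, h2⟩ | ⟨h1, h2⟩ <;>
      rw [h1, h2] at habs <;> norm_num at habs
  have hcR : ((A.1 1 0 : ℤ) : ℝ) ≠ 0 := by exact_mod_cast hc
  -- Vieta for the axis endpoints
  have hs : (A.1 1 0 : ℝ) * αm + (A.1 1 0 : ℝ) * αp = (A.1 0 0 : ℝ) - (A.1 1 1 : ℝ) := by
    have key : (αp - αm) * ((A.1 1 0 : ℝ) * (αm + αp) + ((A.1 1 1 : ℝ) - (A.1 0 0 : ℝ))) = 0 := by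
      linear_combination hp - hm
    rcases mul_eq_zero.mp key with h | h
    · exfalso; linarith
    · linear_combination h
  have hpr : (A.1 1 0 : ℝ) * (αm * αp) = -(A.1 0 1 : ℝ) := by
    linear_combination αm * hs - hm
  have hfac : ∀ X : ℝ, (A.1 1 0 : ℝ) * X^2 + ((A.1 1 1 : ℝ) - (A.1 0 0 : ℝ)) * X - (A.1 0 1 : ℝ)
      = (A.1 1 0 : ℝ) * ((X - αm) * (X - αp)) := by
    intro X
    linear_combination X * hs - hpr
  -- translation of `insideAxis` in terms of the sign of the quadratic form
  have inside_iff : ∀ pt : OnePoint ℚ,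
      insideAxis αm αp pt ↔ A.1 1 0 * VV.Ff A.1 (VV.vec pt) < 0 := by
    intro pt
    cases pt with
    | infty =>
        have hval : VV.Ff A.1 (VV.vec OnePoint.infty) = A.1 1 0 := by
          rw [VV.Ff_expand]; show _ * (1:ℤ)^2 + _ * 1 * 0 - _ * (0:ℤ)^2 = _; ring
        rw [hval]
        simp only [insideAxis]
        constructor
        · exact False.elim
        · intro h
          exact absurd h (not_lt.mpr (mul_self_pos.mpr hc).le)
    | coe x =>
        have hdpos : (0:ℝ) < (x.den : ℝ) := by exact_mod_cast x.pos
        have hnum : ((x.num : ℝ)) = (x : ℝ) * (x.den : ℝ) := by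
          rw [Rat.cast_def]; field_simp
        have hkey : ((A.1 1 0 * VV.Ff A.1 (VV.vec (x : OnePoint ℚ)) : ℤ) : ℝ)
            = ((x.den : ℝ)^2 * (A.1 1 0 : ℝ)^2) * (((x:ℝ) - αm) * ((x:ℝ) - αp)) := by
          have hvv : VV.vec (x : OnePoint ℚ) = (x.num, (x.den : ℤ)) := rfl
          rw [hvv, VV.Ff_expand]
          push_cast
          linear_combination ((x.den : ℝ)^2 * (A.1 1 0 : ℝ)) * (hfac (x:ℝ))
            + ((A.1 1 0 : ℝ)^2 * (x.num : ℝ) + (A.1 1 0 : ℝ)^2 * (x:ℝ) * (x.den : ℝ)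
               + (A.1 1 0 : ℝ) * ((A.1 1 1 : ℝ) - (A.1 0 0 : ℝ)) * (x.den : ℝ)) * hnum
        have hposf : (0:ℝ) < (x.den : ℝ)^2 * (A.1 1 0 : ℝ)^2 := by positivity
        have hiff1 : insideAxis αm αp (x : OnePoint ℚ) ↔ (αm < (x:ℝ) ∧ (x:ℝ) < αp) := Iff.rfl
        rw [hiff1]
        constructor
        · rintro ⟨h1, h2⟩
          have hprod : ((x:ℝ) - αm) * ((x:ℝ) - αp) < 0 :=
            mul_neg_of_pos_of_neg (by linarith) (by linarith)
          have : ((A.1 1 0 * VV.Ff A.1 (VV.vec (x : OnePoint ℚ)) : ℤ) : ℝ) < 0 := by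
            rw [hkey]
            exact mul_neg_of_pos_of_neg hposf hprod
          exact_mod_cast this
        · intro h
          have h' : ((A.1 1 0 * VV.Ff A.1 (VV.vec (x : OnePoint ℚ)) : ℤ) : ℝ) < 0 := by
            exact_mod_cast h
          rw [hkey] at h'
          have hprod : ((x:ℝ) - αm) * ((x:ℝ) - αp) < 0 := by
            by_contra hge
            push_neg at hge
            nlinarith
          constructor
          · by_contra hle
            push_neg at hle
            nlinarith
          · by_contra hle
            push_neg at hle
            nlinarith
  -- the form is nonzero on all vertices
  have hnz : ∀ pt : OnePoint ℚ, VV.Ff A.1 (VV.vec pt) ≠ 0 := fun pt =>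
    VV.Ff_ne_zero A habs hc (VV.vec_coprime pt)
  -- `hv` gives that the form takes value `±1` at `v`
  have hε : VV.Ff A.1 (VV.vec v) = 1 ∨ VV.Ff A.1 (VV.vec v) = -1 := by
    have hmv : mob A v = VV.toOP (VV.act A.1 (VV.vec v)) := VV.mob_eq A v
    have hcp : IsCoprime (VV.act A.1 (VV.vec v)).1 (VV.act A.1 (VV.vec v)).2 :=
      VV.act_coprime A (VV.vec_coprime v)
    rw [hmv, VV.fareyAdj_iff] at hv
    rcases VV.vec_toOP hcp with hvv | hvv <;> rw [hvv] at hv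
    · have : |VV.Ff A.1 (VV.vec v)| = 1 := hv
      rcases abs_eq (by norm_num : (0:ℤ) ≤ 1) |>.mp this with h | h
      · exact Or.inl h
      · exact Or.inr h
    · rw [VV.dt_neg_right] at hv
      have : |VV.Ff A.1 (VV.vec v)| = 1 := by rwa [abs_neg] at hv
      rcases abs_eq (by norm_num : (0:ℤ) ≤ 1) |>.mp this with h | h
      · exact Or.inl h
      · exact Or.inr h
  obtain ⟨B, htB, hFv1, ⟨η, hη, hFB⟩, hzp⟩ := VV.normalize A habs (VV.vec v) hε
  -- sign bookkeeping
  have hsame : 0 < VV.Ff A.1 (VV.vec w) * VV.Ff A.1 (VV.vec v) := by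
    apply VV.same_sign_of_iff hc (hnz w) (hnz v)
    rw [← inside_iff w, ← inside_iff v]
    exact hside
  have hopp : VV.Ff A.1 (VV.vec u) * VV.Ff A.1 (VV.vec w) < 0 := by
    apply VV.opp_sign_of_not_iff hc (hnz u) (hnz w)
    rw [← inside_iff u, ← inside_iff w]
    exact hop
  have hη2 : η * η = 1 := by rcases hη with rfl | rfl <;> ring
  have hFw : 0 < VV.Ff B.1 (VV.vec w) := by
    have h1 : VV.Ff B.1 (VV.vec w) * VV.Ff B.1 (VV.vec v)
        = VV.Ff A.1 (VV.vec w) * VV.Ff A.1 (VV.vec v) := by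
      rw [hFB, hFB]
      rcases hη with rfl | rfl <;> ring
    rw [hFv1, mul_one] at h1
    linarith [hsame, h1]
  have hFu : VV.Ff B.1 (VV.vec u) < 0 := by
    have h1 : VV.Ff B.1 (VV.vec u) * VV.Ff B.1 (VV.vec w)
        = VV.Ff A.1 (VV.vec u) * VV.Ff A.1 (VV.vec w) := by
      rw [hFB, hFB]
      rcases hη with rfl | rfl <;> ring
    nlinarith
  -- coordinates in the basis `(vec v, B · vec v)`
  set e₁ := VV.vec v with he₁
  set e₂ := VV.act B.1 e₁ with he₂
  have hdte : VV.dt e₁ e₂ = 1 := hFv1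
  have hw := VV.cramer hdte (VV.vec w)
  have hu := VV.cramer hdte (VV.vec u)
  set m := VV.dt (VV.vec w) e₂ with hm'
  set n := VV.dt e₁ (VV.vec w) with hn'
  set k := VV.dt (VV.vec u) e₂ with hk'
  set l := VV.dt e₁ (VV.vec u) with hl'
  have hGw : VV.Ff B.1 (VV.vec w) = VV.Gf (B.1 0 0 + B.1 1 1) m n := by
    conv_lhs => rw [hw]
    rw [VV.Ff_cmb, hFv1, mul_one]
  have hGu : VV.Ff B.1 (VV.vec u) = VV.Gf (B.1 0 0 + B.1 1 1) k l := by
    conv_lhs => rw [hu]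
    rw [VV.Ff_cmb, hFv1, mul_one]
  have hdtwu : VV.dt (VV.vec w) (VV.vec u) = 1 ∨ VV.dt (VV.vec w) (VV.vec u) = -1 := by
    have := (VV.fareyAdj_iff w u).mp hadj
    rcases abs_eq (by norm_num : (0:ℤ) ≤ 1) |>.mp this with h | h
    · exact Or.inl h
    · exact Or.inr h
  have hml : m*l - n*k = VV.dt (VV.vec w) (VV.vec u) := by
    have hr := VV.dt_cmb e₁ e₂ m n k l
    rw [hdte, mul_one] at hr
    rw [← hw, ← hu] at hr
    exact hr.symm
  -- the core combinatorial result
  have horb : VV.Orb (B.1 0 0 + B.1 1 1) m n := by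
    apply VV.core htB (by rw [← hGw]; exact hFw) (by rw [← hGu]; exact hFu)
    rw [hml]
    exact hdtwu
  obtain ⟨j, hj⟩ := VV.orb_act B e₁ horb
  obtain ⟨nn, hnn⟩ := hzp j
  refine ⟨nn, ?_⟩
  have hact : VV.act ((A^nn : SL2Z)).1 e₁ = VV.vec w ∨
      VV.act ((A^nn : SL2Z)).1 e₁ = -(VV.vec w) := by
    rcases hnn with h | h
    · rw [← h]
      rcases hj with h2 | h2
      · left; rw [h2, ← hw]
      · right; rw [h2, ← hw]
    · have hBj : VV.act ((B^j : SL2Z)).1 e₁ = - VV.act ((A^nn : SL2Z)).1 e₁ := by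
        rw [h, VV.act_neg]
      rcases hj with h2 | h2
      · right
        have hthis := h2.symm.trans hBj
        rw [← hw] at hthis
        exact (neg_eq_iff_eq_neg.mpr hthis).symm
      · left
        have hthis := h2.symm.trans hBj
        rw [← hw] at hthis
        exact (neg_inj.mp hthis).symm
  rw [VV.mob_eq (A^nn) v]
  rcases hact with h | h
  · rw [← he₁, h, VV.toOP_vec]
  · rw [← he₁, h, VV.toOP_neg, VV.toOP_vec]
end
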